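/- arXiv:2106.00621 — 3 statements merged into one kernel-verified Lean document; each statement's English description precedes it below -/
import Mathlib

section
/- Let 0 < θ ≤ p < ∞, α₁, α₂ ∈ ℝ, σ₁ = θ(p/θ)', σ₂ ≥ p, and let {t_k} be a p-admissible weight sequence in Ẋ_{α,σ,p}. Then α₂ ≥ α₁. -/
open MeasureTheory ENNReal Filter
open scoped ENNReal Topology

noncomputable section

/-- Axis-parallel cube in `ℝⁿ` with lower-left corner `a` and side length `l`. -/
def Cube {n : ℕ} (a : Fin n → ℝ) (l : ℝ) : Set (Fin n → ℝ) :=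
  {x | ∀ i, a i ≤ x i ∧ x i < a i + l}

/-- `M_Q(f) = |Q|⁻¹ ∫_Q |f|` (in `ℝ≥0∞`). -/
def avg {n : ℕ} (Q : Set (Fin n → ℝ)) (f : (Fin n → ℝ) → ℝ) : ℝ≥0∞ :=
  (∫⁻ x in Q, ENNReal.ofReal |f x|) / volume Q

/-- `M_{Q,r}(f) = (|Q|⁻¹ ∫_Q |f|^r)^{1/r}` (in `ℝ≥0∞`). -/
def avgNorm {n : ℕ} (Q : Set (Fin n → ℝ)) (r : ℝ) (f : (Fin n → ℝ) → ℝ) : ℝ≥0∞ :=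
  ((∫⁻ x in Q, ENNReal.ofReal (|f x| ^ r)) / volume Q) ^ (1 / r)

/-- A weight: nonnegative, locally integrable, positive a.e. -/
structure IsWeight {n : ℕ} (γ : (Fin n → ℝ) → ℝ) : Prop where
  nonneg : ∀ x, 0 ≤ γ x
  locInt : LocallyIntegrable γ (volume : Measure (Fin n → ℝ))
  pos : ∀ᵐ x : Fin n → ℝ, 0 < γ x

/-- The `A_p` condition (`1 < p`) with a given constant `C`:
for every cube `Q`, `M_Q(γ) · M_{Q,p'/p}(γ⁻¹) ≤ C`, where `p'/p = 1/(p-1)`. -/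
def ApWith {n : ℕ} (p : ℝ) (C : ℝ≥0∞) (γ : (Fin n → ℝ) → ℝ) : Prop :=
  ∀ (a : Fin n → ℝ) (l : ℝ), 0 < l →
    avg (Cube a l) γ * avgNorm (Cube a l) (1 / (p - 1)) (fun x => (γ x)⁻¹) ≤ C

/-- Muckenhoupt class `A_p(ℝⁿ)` for `1 < p < ∞`. -/
def MuckenhouptAp {n : ℕ} (p : ℝ) (γ : (Fin n → ℝ) → ℝ) : Prop :=
  ∃ C : ℝ≥0∞, 0 < C ∧ C < ∞ ∧ ApWith p C γ

/-- Muckenhoupt class `A_1(ℝⁿ)`. -/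
def MuckenhouptA1 {n : ℕ} (γ : (Fin n → ℝ) → ℝ) : Prop :=
  ∃ C : ℝ≥0∞, 0 < C ∧ C < ∞ ∧ ∀ (a : Fin n → ℝ) (l : ℝ), 0 < l →
    ∀ᵐ y : Fin n → ℝ, y ∈ Cube a l → avg (Cube a l) γ ≤ C * ENNReal.ofReal (γ y)

/-- Muckenhoupt class `A_p(ℝⁿ)` for `1 ≤ p < ∞`. -/
def MuckenhouptA {n : ℕ} (p : ℝ) (γ : (Fin n → ℝ) → ℝ) : Prop :=
  if p = 1 then MuckenhouptA1 γ else MuckenhouptAp p γ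

/-- Hardy–Littlewood maximal function over axis-parallel cubes. -/
def maximal {n : ℕ} (f : (Fin n → ℝ) → ℝ) (x : Fin n → ℝ) : ℝ≥0∞ :=
  ⨆ (a : Fin n → ℝ) (l : ℝ) (_ : 0 < l) (_ : x ∈ Cube a l), avg (Cube a l) f

/-- The conjugate exponent `r' = r/(r-1)`. -/
def conjExp (r : ℝ) : ℝ := r / (r - 1)

/-- `‖{F_k}| L_p(ℓ_q)‖` for `0 < p,q < ∞`, for `ℝ≥0∞`-valued functions. -/
def LpLqNorm {n : ℕ} (p q : ℝ) (F : ℤ → (Fin n → ℝ) → ℝ≥0∞) : ℝ≥0∞ :=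
  (∫⁻ x, (∑' k : ℤ, F k x ^ q) ^ (p / q)) ^ (1 / p)

/-- A `p`-admissible weight sequence: each `t_k ∈ L_p^loc(ℝⁿ)`. -/
def pAdmissible {n : ℕ} (p : ℝ) (t : ℤ → (Fin n → ℝ) → ℝ) : Prop :=
  ∀ k : ℤ, LocallyIntegrable (fun x => |t k x| ^ p) (volume : Measure (Fin n → ℝ))

/-- The first condition in the definition of `Ẋ_{α,σ,p}` (Asum1), with constant `C₁`. -/
def Asum1 {n : ℕ} (α₁ σ₁ p : ℝ) (C₁ : ℝ) (t : ℤ → (Fin n → ℝ) → ℝ) : Prop :=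
  ∀ k j : ℤ, k ≤ j → ∀ (a : Fin n → ℝ) (l : ℝ), 0 < l →
    avgNorm (Cube a l) p (t k) * avgNorm (Cube a l) σ₁ (fun x => (t j x)⁻¹)
      ≤ ENNReal.ofReal (C₁ * 2 ^ (α₁ * ((k : ℝ) - (j : ℝ))))

/-- The second condition in the definition of `Ẋ_{α,σ,p}` (Asum2), with constant `C₂`. -/
def Asum2 {n : ℕ} (α₂ σ₂ p : ℝ) (C₂ : ℝ) (t : ℤ → (Fin n → ℝ) → ℝ) : Prop :=
  ∀ k j : ℤ, k ≤ j → ∀ (a : Fin n → ℝ) (l : ℝ), 0 < l →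
    (avgNorm (Cube a l) p (t k))⁻¹ * avgNorm (Cube a l) σ₂ (t j)
      ≤ ENNReal.ofReal (C₂ * 2 ^ (α₂ * ((j : ℝ) - (k : ℝ))))

/-- The weight class `Ẋ_{α,σ,p}`. -/
def XClass {n : ℕ} (α₁ α₂ σ₁ σ₂ p : ℝ) (t : ℤ → (Fin n → ℝ) → ℝ) : Prop :=
  pAdmissible p t ∧
    (∃ C₁ : ℝ, 0 < C₁ ∧ Asum1 α₁ σ₁ p C₁ t) ∧
    (∃ C₂ : ℝ, 0 < C₂ ∧ Asum2 α₂ σ₂ p C₂ t)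

/-- The dyadic cube `Q_{v,m} = 2^{-v}([0,1)ⁿ + m)`. -/
def dyadicCube {n : ℕ} (v : ℤ) (m : Fin n → ℤ) : Set (Fin n → ℝ) :=
  {x | ∀ i, (m i : ℝ) * (2 : ℝ) ^ (-v) ≤ x i ∧ x i < ((m i : ℝ) + 1) * (2 : ℝ) ^ (-v)}

/-- The cube `3Q_{v,m}`, concentric with `Q_{v,m}` with triple side length. -/
def tripleDyadic {n : ℕ} (v : ℤ) (m : Fin n → ℤ) : Set (Fin n → ℝ) :=
  {x | ∀ i, ((m i : ℝ) - 1) * (2 : ℝ) ^ (-v) ≤ x i ∧ x i < ((m i : ℝ) + 2) * (2 : ℝ) ^ (-v)}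

/-- `t_{k,m} = ‖t_k | L_p(Q_{k,m})‖` in `ℝ≥0∞`. -/
def tkm {n : ℕ} (p : ℝ) (t : ℤ → (Fin n → ℝ) → ℝ) (k : ℤ) (m : Fin n → ℤ) : ℝ≥0∞ :=
  (∫⁻ x in dyadicCube k m, ENNReal.ofReal (|t k x| ^ p)) ^ (1 / p)

/-- The quasi-norm of the sequence space `ḟ_{p,q}(ℝⁿ, {t_k})`. -/
def fNorm {n : ℕ} (p q : ℝ) (t : ℤ → (Fin n → ℝ) → ℝ)
    (lam : ℤ → (Fin n → ℤ) → ℂ) : ℝ≥0∞ :=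
  (∫⁻ x, (∑' k : ℤ, ∑' m : Fin n → ℤ,
      (ENNReal.ofReal ((2 : ℝ) ^ ((k : ℝ) * n * q / 2)) *
        ENNReal.ofReal (t k x) ^ q * ENNReal.ofReal (‖lam k m‖) ^ q) *
        (dyadicCube k m).indicator (fun _ => (1 : ℝ≥0∞)) x) ^ (p / q)) ^ (1 / p)

def lqNorm (q : ℝ≥0∞) (g : ℤ → ℝ≥0∞) : ℝ≥0∞ :=
  if q = ∞ then ⨆ k, g k else (∑' k : ℤ, g k ^ q.toReal) ^ (1 / q.toReal)

def lpNorm {n : ℕ} (p : ℝ≥0∞) (g : (Fin n → ℝ) → ℝ≥0∞) : ℝ≥0∞ :=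
  if p = ∞ then essSup g volume else (∫⁻ x, g x ^ p.toReal) ^ (1 / p.toReal)

/-- `λ*_{k,m,p,d} = (∑_{h∈ℤⁿ} |λ_{k,h}|^p / (1+|h-m|)^d)^{1/p}`. -/
def lamStar {n : ℕ} (p d : ℝ) (lam : ℤ → (Fin n → ℤ) → ℂ) (k : ℤ) (m : Fin n → ℤ) : ℝ :=
  (∑' h : Fin n → ℤ, ‖lam k h‖ ^ p /
      (1 + Real.sqrt (∑ i, ((h i : ℝ) - (m i : ℝ)) ^ 2)) ^ d) ^ (1 / p)

end
section Helpers

open MeasureTheory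

variable {α : Type*} [MeasurableSpace α] {μ : MeasureTheory.Measure α}

/-- Power mean monotonicity on a probability measure. -/
lemma helper_pow_mean_mono (hμ : μ Set.univ = 1) {H : α → ℝ≥0∞}
    (hH : AEMeasurable H μ) {r s : ℝ} (hr : 0 < r) (hrs : r ≤ s) :
    (∫⁻ x, H x ^ r ∂μ) ^ (1 / r) ≤ (∫⁻ x, H x ^ s ∂μ) ^ (1 / s) := by
  rcases eq_or_lt_of_le hrs with h | h
  · subst h; exact le_rfl
  have hs : 0 < s := hr.trans h
  set u : ℝ := s / r with hu_def
  have hu : 1 < u := (one_lt_div hr).mpr h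
  have hru : r * u = s := by rw [hu_def]; field_simp
  have hconj : u.HolderConjugate (u / (u - 1)) := Real.HolderConjugate.conjExponent hu
  have key := ENNReal.lintegral_mul_le_Lp_mul_Lq μ hconj (hH.pow_const r)
    (aemeasurable_const (b := (1 : ℝ≥0∞)))
  simp only [Pi.mul_apply, mul_one, ENNReal.one_rpow, lintegral_one, hμ,
    ENNReal.one_rpow, ← ENNReal.rpow_mul, hru] at key
  calc (∫⁻ x, H x ^ r ∂μ) ^ (1 / r)
      ≤ ((∫⁻ x, H x ^ s ∂μ) ^ (1 / u)) ^ (1 / r) :=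
        ENNReal.rpow_le_rpow key (by positivity)
    _ = (∫⁻ x, H x ^ s ∂μ) ^ (1 / s) := by
        rw [← ENNReal.rpow_mul]
        congr 1
        rw [← hru]
        field_simp
  
/-- Cauchy–Schwarz lower bound. -/
lemma helper_cs (hμ : μ Set.univ = 1) {G : α → ℝ≥0∞} (hG : AEMeasurable G μ)
    (hpos : ∀ᵐ x ∂μ, 0 < G x ∧ G x < ⊤) {r : ℝ} (hr : 0 < r) :
    1 ≤ (∫⁻ x, G x ^ r ∂μ) ^ (1 / r) * (∫⁻ x, (G x)⁻¹ ^ r ∂μ) ^ (1 / r) := by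
  have hconj : (2 : ℝ).HolderConjugate 2 := Real.HolderConjugate.two_two
  have key := ENNReal.lintegral_mul_le_Lp_mul_Lq μ hconj (hG.pow_const (r / 2))
    ((hG.inv).pow_const (r / 2))
  have h1 : (fun x => G x ^ (r / 2) * (G x)⁻¹ ^ (r / 2)) =ᵐ[μ] fun _ => (1 : ℝ≥0∞) := by
    filter_upwards [hpos] with x hx
    have h0 : G x ^ (r / 2) ≠ 0 := (ENNReal.rpow_pos hx.1 hx.2.ne).ne'
    have ht : G x ^ (r / 2) ≠ ⊤ := (ENNReal.rpow_lt_top_of_nonneg (by positivity) hx.2.ne).ne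
    rw [ENNReal.inv_rpow, ENNReal.mul_inv_cancel h0 ht]
  have hL : ∫⁻ x, ((fun x => G x ^ (r / 2)) * fun x => (G x)⁻¹ ^ (r / 2)) x ∂μ = 1 := by
    simp only [Pi.mul_apply]
    rw [lintegral_congr_ae h1, lintegral_one, hμ]
  simp only [Pi.inv_apply] at key
  rw [hL] at key
  have hhalf : r / 2 * 2 = r := by ring
  simp only [← ENNReal.rpow_mul, hhalf] at key
  have key2 := ENNReal.rpow_le_rpow key (le_of_lt (by positivity : (0:ℝ) < 2 / r))
  rw [ENNReal.one_rpow, ENNReal.mul_rpow_of_nonneg _ _ (by positivity : (0:ℝ) ≤ 2 / r),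
    ← ENNReal.rpow_mul, ← ENNReal.rpow_mul] at key2
  have : (1 : ℝ) / 2 * (2 / r) = 1 / r := by field_simp
  rwa [this] at key2

/-- Combined lower bound `1 ≤ M_{s₂}(G) · M_{s₁}(G⁻¹)`. -/
lemma helper_one_le (hμ : μ Set.univ = 1) {G : α → ℝ≥0∞} (hG : AEMeasurable G μ)
    (hpos : ∀ᵐ x ∂μ, 0 < G x ∧ G x < ⊤) {s₁ s₂ : ℝ} (h1 : 0 < s₁) (h2 : 0 < s₂) :
    1 ≤ (∫⁻ x, G x ^ s₂ ∂μ) ^ (1 / s₂) * (∫⁻ x, (G x)⁻¹ ^ s₁ ∂μ) ^ (1 / s₁) := by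
  have hr : 0 < min s₁ s₂ := lt_min h1 h2
  refine (helper_cs hμ hG hpos hr).trans (mul_le_mul' ?_ ?_)
  · exact helper_pow_mean_mono hμ hG hr (min_le_right _ _)
  · exact helper_pow_mean_mono hμ hG.inv hr (min_le_left _ _)

lemma helper_contra {c b ρ : ℝ} (hc : 0 < c) (hρ : 0 < ρ)
    (h : ∀ m : ℕ, c * ((2 : ℝ) ^ ρ) ^ m ≤ b) : False := by
  obtain ⟨m, hm⟩ := pow_unbounded_of_one_lt (b / c)
    ((Real.one_lt_rpow_iff_of_pos two_pos).mpr (Or.inl ⟨one_lt_two, hρ⟩))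
  rw [div_lt_iff₀ hc] at hm
  linarith [h m]

lemma helper_rpow_neg (ρ : ℝ) (m : ℕ) :
    (2 : ℝ) ^ (-(ρ * m)) = (((2 : ℝ) ^ ρ) ^ m)⁻¹ := by
  rw [Real.rpow_neg (by norm_num), Real.rpow_mul (by norm_num), Real.rpow_natCast]

lemma cube_unit_eq (n : ℕ) :
    Cube (0 : Fin n → ℝ) 1 = Set.univ.pi fun _ : Fin n => Set.Ico (0 : ℝ) 1 := by
  ext x
  simp [Cube, Set.mem_pi]

lemma volume_cube_unit (n : ℕ) : MeasureTheory.volume (Cube (0 : Fin n → ℝ) 1) = 1 := by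
  rw [cube_unit_eq, MeasureTheory.volume_pi_pi]
  simp

end Helpers

/-- for `{t_k} ∈ Ẋ_{α,σ,p}` with `σ₁ = θ(p/θ)'` and `σ₂ ≥ p`, one has `α₂ ≥ α₁`. -/
theorem alpha_two_ge_alpha_one (n : ℕ) (hn : 0 < n) (θ p α₁ α₂ σ₂ : ℝ)
    (hθ : 0 < θ) (hθp : θ ≤ p) (hσ₂ : p ≤ σ₂)
    (t : ℤ → (Fin n → ℝ) → ℝ) (hw : ∀ k, ∀ᵐ x : Fin n → ℝ, 0 < t k x)
    (ht : XClass α₁ α₂ (θ * conjExp (p / θ)) σ₂ p t) :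
    α₁ ≤ α₂ := by
  obtain ⟨hadm, ⟨C₁, hC₁, hA1⟩, ⟨C₂, hC₂, hA2⟩⟩ := ht
  have hp : 0 < p := hθ.trans_le hθp
  have hσ₂p : 0 < σ₂ := hp.trans_le hσ₂
  set Q : Set (Fin n → ℝ) := Cube 0 1 with hQ
  have hvol : volume Q = 1 := volume_cube_unit n
  have hμ : (volume.restrict Q) Set.univ = 1 := by
    rw [Measure.restrict_apply_univ, hvol]
  -- measurability of |t k|
  have habs : ∀ k, AEMeasurable (fun x => |t k x|) (volume : Measure (Fin n → ℝ)) := by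
    intro k
    have h1 : AEMeasurable (fun x => |t k x| ^ p) (volume : Measure (Fin n → ℝ)) :=
      (hadm k).aestronglyMeasurable.aemeasurable
    have hpp : p * (1 / p) = 1 := by field_simp
    refine (h1.pow_const (1 / p)).congr (Filter.Eventually.of_forall fun x => ?_)
    show (|t k x| ^ p) ^ (1 / p) = |t k x|
    rw [← Real.rpow_mul (abs_nonneg _), hpp, Real.rpow_one]
  set G : ℤ → (Fin n → ℝ) → ℝ≥0∞ := fun k x => ENNReal.ofReal (t k x) with hGdef
  have hGmeas : ∀ k, AEMeasurable (G k) (volume.restrict Q) := by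
    intro k
    refine AEMeasurable.restrict ?_
    refine (ENNReal.measurable_ofReal.comp_aemeasurable (habs k)).congr ?_
    filter_upwards [hw k] with x hx
    simp [hGdef, abs_of_pos hx]
  have hGpos : ∀ k, ∀ᵐ x ∂(volume.restrict Q), 0 < G k x ∧ G k x < ⊤ := by
    intro k
    filter_upwards [ae_restrict_of_ae (hw k)] with x hx
    exact ⟨ENNReal.ofReal_pos.mpr hx, ENNReal.ofReal_lt_top⟩
  -- integral identities
  have hI : ∀ (k : ℤ) (r : ℝ),
      (∫⁻ x in Q, ENNReal.ofReal (|t k x| ^ r)) = ∫⁻ x, G k x ^ r ∂(volume.restrict Q) := by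
    intro k r
    refine lintegral_congr_ae ?_
    filter_upwards [ae_restrict_of_ae (hw k)] with x hx
    rw [abs_of_pos hx, hGdef, ← ENNReal.ofReal_rpow_of_pos hx]
  have hIinv : ∀ (k : ℤ) (r : ℝ),
      (∫⁻ x in Q, ENNReal.ofReal (|(t k x)⁻¹| ^ r))
        = ∫⁻ x, (G k x)⁻¹ ^ r ∂(volume.restrict Q) := by
    intro k r
    refine lintegral_congr_ae ?_
    filter_upwards [ae_restrict_of_ae (hw k)] with x hx
    rw [abs_of_pos (inv_pos.mpr hx), hGdef, ← ENNReal.ofReal_inv_of_pos hx,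
      ← ENNReal.ofReal_rpow_of_pos (inv_pos.mpr hx)]
  have hAvg : ∀ (r : ℝ) (f : (Fin n → ℝ) → ℝ),
      avgNorm Q r f = (∫⁻ x in Q, ENNReal.ofReal (|f x| ^ r)) ^ (1 / r) := by
    intro r f
    rw [avgNorm, hvol, div_one]
  have hAvgt : ∀ (k : ℤ) (r : ℝ),
      avgNorm Q r (t k) = (∫⁻ x, G k x ^ r ∂(volume.restrict Q)) ^ (1 / r) := by
    intro k r; rw [hAvg, hI]
  have hAvginv : ∀ (k : ℤ) (r : ℝ),
      avgNorm Q r (fun x => (t k x)⁻¹)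
        = (∫⁻ x, (G k x)⁻¹ ^ r ∂(volume.restrict Q)) ^ (1 / r) := by
    intro k r; rw [hAvg, hIinv]
  -- positivity of the integrals
  have hIpos : ∀ (k : ℤ) (r : ℝ), 0 < ∫⁻ x, G k x ^ r ∂(volume.restrict Q) := by
    intro k r
    rcases eq_or_lt_of_le (zero_le : 0 ≤ ∫⁻ x, G k x ^ r ∂(volume.restrict Q)) with h0 | h
    · exfalso
      have hae := (lintegral_eq_zero_iff' ((hGmeas k).pow_const r)).mp h0.symm
      have hc : ∀ᵐ _x ∂(volume.restrict Q), False := by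
        filter_upwards [hae, hGpos k] with x hx hx2
        exact absurd hx (ENNReal.rpow_pos hx2.1 hx2.2.ne).ne'
      have hz : (volume.restrict Q) = 0 :=
        ae_eq_bot.mp (Filter.eventually_false_iff_eq_bot.mp hc)
      rw [hz] at hμ
      simp at hμ
    · exact h
  have hApos : ∀ k : ℤ, avgNorm Q p (t k) ≠ 0 := by
    intro k
    rw [hAvgt]
    simp only [ne_eq, ENNReal.rpow_eq_zero_iff, not_or, not_and]
    constructor
    · intro h; exact absurd h (hIpos k p).ne'
    · intro _; exact not_lt.mpr (by positivity)
  -- finiteness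
  have hAfin : ∀ k : ℤ, avgNorm Q p (t k) ≠ ⊤ := by
    intro k
    rw [hAvgt]
    refine (ENNReal.rpow_lt_top_of_nonneg (by positivity) ?_).ne
    rw [← hI]
    have hsub : Q ⊆ Set.Icc (0 : Fin n → ℝ) 1 := by
      intro x hx
      refine Set.mem_Icc.mpr ⟨fun i => ?_, fun i => ?_⟩
      · simpa using (hx i).1
      · have h2 := (hx i).2
        simp only [Pi.zero_apply, zero_add] at h2
        simpa using h2.le
    have hint := (hadm k).integrableOn_isCompact (isCompact_Icc (a := (0 : Fin n → ℝ)) (b := 1))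
    have hfin := hint.2
    refine ne_of_lt (lt_of_le_of_lt ?_ hfin)
    calc ∫⁻ x in Q, ENNReal.ofReal (|t k x| ^ p)
        ≤ ∫⁻ x in Set.Icc (0 : Fin n → ℝ) 1, ENNReal.ofReal (|t k x| ^ p) :=
          lintegral_mono_set hsub
      _ ≤ ∫⁻ x in Set.Icc (0 : Fin n → ℝ) 1, ((‖|t k x| ^ p‖₊ : ℝ≥0∞)) :=
          lintegral_mono fun x => Real.ofReal_le_enorm _
  -- the two cases
  rcases eq_or_lt_of_le hθp with hcase | hcase
  · -- θ = p, so σ₁ = 0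
    have hσ₁0 : θ * conjExp (p / θ) = 0 := by
      rw [hcase, div_self hp.ne', conjExp]
      norm_num
    have hB : ∀ f : (Fin n → ℝ) → ℝ, avgNorm Q (θ * conjExp (p / θ)) f = 1 := by
      intro f
      rw [hσ₁0, avgNorm]
      norm_num
    have hα₁ : α₁ ≤ 0 := by
      by_contra hcon
      push_neg at hcon
      set a : ℝ≥0∞ := avgNorm Q p (t 0) with ha_def
      have hatoReal : 0 < a.toReal := ENNReal.toReal_pos (hApos 0) (hAfin 0)
      refine helper_contra (c := a.toReal) (b := C₁) (ρ := α₁) hatoReal hcon fun m => ?_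
      have h1 := hA1 0 (m : ℤ) (Int.natCast_nonneg m) 0 1 one_pos
      rw [← hQ, hB, mul_one] at h1
      have hexp : α₁ * (((0 : ℤ) : ℝ) - (((m : ℕ) : ℤ) : ℝ)) = -(α₁ * m) := by
        push_cast; ring
      rw [hexp, helper_rpow_neg] at h1
      have h2 := ENNReal.toReal_le_of_le_ofReal (by positivity) h1
      rw [← ha_def] at h2
      calc a.toReal * ((2:ℝ) ^ α₁) ^ m
          ≤ (C₁ * (((2:ℝ) ^ α₁) ^ m)⁻¹) * ((2:ℝ) ^ α₁) ^ m := by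
            have hX : (0:ℝ) < ((2:ℝ) ^ α₁) ^ m := by positivity
            exact mul_le_mul_of_nonneg_right h2 hX.le
        _ = C₁ := by
            field_simp
    have hα₂ : 0 ≤ α₂ := by
      by_contra hcon
      push_neg at hcon
      set d : ℝ≥0∞ := avgNorm Q σ₂ (t 0) with hd_def
      have hd0 : d ≠ 0 := by
        rw [hd_def, hAvgt]
        simp only [ne_eq, ENNReal.rpow_eq_zero_iff, not_or, not_and]
        exact ⟨fun h => absurd h (hIpos 0 σ₂).ne', fun _ => not_lt.mpr (by positivity)⟩
      -- bound d using k = -m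
      have hdle : ∀ m : ℕ, d ≤ ENNReal.ofReal (C₁ * (C₂ * 2 ^ (α₂ * (m:ℝ)))) := by
        intro m
        set k : ℤ := -(m : ℤ) with hk_def
        have hk0 : k ≤ 0 := by simp [hk_def]
        have hAk := hA1 k k le_rfl 0 1 one_pos
        rw [← hQ, hB, mul_one] at hAk
        have hAkC : avgNorm Q p (t k) ≤ ENNReal.ofReal C₁ := by
          refine hAk.trans (le_of_eq ?_)
          congr 1
          rw [sub_self, mul_zero, Real.rpow_zero, mul_one]
        have h2 := hA2 k 0 hk0 0 1 one_pos
        rw [← hQ] at h2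
        have hexp : α₂ * (((0 : ℤ) : ℝ) - (k : ℝ)) = α₂ * m := by
          rw [hk_def]; push_cast; ring
        rw [hexp] at h2
        have hd_eq : d = avgNorm Q p (t k) * ((avgNorm Q p (t k))⁻¹ * d) := by
          rw [← mul_assoc, ENNReal.mul_inv_cancel (hApos k) (hAfin k), one_mul]
        rw [hd_eq, hd_def]
        calc avgNorm Q p (t k) * ((avgNorm Q p (t k))⁻¹ * avgNorm Q σ₂ (t 0))
            ≤ ENNReal.ofReal C₁ * ENNReal.ofReal (C₂ * 2 ^ (α₂ * (m:ℝ))) :=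
              mul_le_mul' hAkC h2
          _ = ENNReal.ofReal (C₁ * (C₂ * 2 ^ (α₂ * (m:ℝ)))) := by
              rw [← ENNReal.ofReal_mul hC₁.le]
      have hdfin : d ≠ ⊤ := by
        refine ne_of_lt (lt_of_le_of_lt (hdle 0) ?_)
        exact ENNReal.ofReal_lt_top
      have hdtoReal : 0 < d.toReal := ENNReal.toReal_pos hd0 hdfin
      refine helper_contra (c := d.toReal) (b := C₁ * C₂) (ρ := -α₂) hdtoReal (by linarith) fun m => ?_
      have h1 := hdle m
      have hexp2 : α₂ * (m:ℝ) = -(-α₂ * m) := by ring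
      rw [hexp2, helper_rpow_neg] at h1
      have h2 := ENNReal.toReal_le_of_le_ofReal (by positivity) h1
      calc d.toReal * ((2:ℝ) ^ (-α₂)) ^ m
          ≤ (C₁ * (C₂ * (((2:ℝ) ^ (-α₂)) ^ m)⁻¹)) * ((2:ℝ) ^ (-α₂)) ^ m := by
            have hX : (0:ℝ) < ((2:ℝ) ^ (-α₂)) ^ m := by positivity
            exact mul_le_mul_of_nonneg_right h2 hX.le
        _ = C₁ * C₂ := by
            field_simp
    linarith
  · -- θ < p
    have hσ₁pos : 0 < θ * conjExp (p / θ) := by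
      have h1 : 1 < p / θ := (one_lt_div hθ).mpr hcase
      have : 0 < conjExp (p / θ) := div_pos (by linarith) (by rw [conjExp] at *; linarith)
      · exact mul_pos hθ this
    by_contra hcon
    push_neg at hcon
    have hδ : 0 < α₁ - α₂ := by linarith
    refine helper_contra (c := 1) (b := C₁ * C₂) (ρ := α₁ - α₂) one_pos hδ fun m => ?_
    have h1 := hA1 0 (m : ℤ) (Int.natCast_nonneg m) 0 1 one_pos
    have h2 := hA2 0 (m : ℤ) (Int.natCast_nonneg m) 0 1 one_pos
    rw [← hQ] at h1 h2
    have hBD : (1 : ℝ≥0∞) ≤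
        avgNorm Q σ₂ (t (m : ℤ)) * avgNorm Q (θ * conjExp (p / θ)) (fun x => (t (m:ℤ) x)⁻¹) := by
      rw [hAvgt, hAvginv]
      exact helper_one_le hμ (hGmeas (m : ℤ)) (hGpos (m : ℤ)) hσ₁pos hσ₂p
    have hchain : (1 : ℝ≥0∞) ≤
        ENNReal.ofReal (C₁ * 2 ^ (α₁ * (((0:ℤ):ℝ) - (((m:ℕ):ℤ):ℝ)))) *
          ENNReal.ofReal (C₂ * 2 ^ (α₂ * ((((m:ℕ):ℤ):ℝ) - ((0:ℤ):ℝ)))) := by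
      refine le_trans hBD ?_
      have he : avgNorm Q σ₂ (t (m : ℤ)) * avgNorm Q (θ * conjExp (p / θ)) (fun x => (t (m:ℤ) x)⁻¹)
          = (avgNorm Q p (t 0) * avgNorm Q (θ * conjExp (p / θ)) (fun x => (t (m:ℤ) x)⁻¹)) *
            ((avgNorm Q p (t 0))⁻¹ * avgNorm Q σ₂ (t (m : ℤ))) := by
        rw [show ∀ A B C D : ℝ≥0∞, (A * B) * (C * D) = (A * C) * (B * D) from fun A B C D => by ring]
        rw [ENNReal.mul_inv_cancel (hApos 0) (hAfin 0), one_mul, mul_comm]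
      rw [he]
      exact mul_le_mul' h1 h2
    rw [← ENNReal.ofReal_mul (by positivity)] at hchain
    have hreal := ENNReal.one_le_ofReal.mp hchain
    have hexp : C₁ * 2 ^ (α₁ * (((0:ℤ):ℝ) - (((m:ℕ):ℤ):ℝ))) * (C₂ * 2 ^ (α₂ * ((((m:ℕ):ℤ):ℝ) - ((0:ℤ):ℝ))))
        = (C₁ * C₂) * 2 ^ (-((α₁ - α₂) * (m:ℝ))) := by
      have e1 : α₁ * (((0:ℤ):ℝ) - (((m:ℕ):ℤ):ℝ)) = -(α₁ * m) := by push_cast; ring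
      have e2 : α₂ * ((((m:ℕ):ℤ):ℝ) - ((0:ℤ):ℝ)) = α₂ * m := by push_cast; ring
      rw [e1, e2, show -((α₁ - α₂) * (m:ℝ)) = -(α₁ * m) + α₂ * m from by ring,
        Real.rpow_add two_pos]
      ring
    rw [hexp, helper_rpow_neg] at hreal
    have hX : (0:ℝ) < ((2:ℝ) ^ (α₁ - α₂)) ^ m := by positivity
    calc (1:ℝ) * ((2:ℝ) ^ (α₁ - α₂)) ^ m
        ≤ ((C₁ * C₂) * (((2:ℝ) ^ (α₁ - α₂)) ^ m)⁻¹) * ((2:ℝ) ^ (α₁ - α₂)) ^ m :=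
          mul_le_mul_of_nonneg_right hreal hX.le
      _ = C₁ * C₂ := by field_simp
end

section
/- Fefferman–Stein dual maximal inequality: Let 1 < p < ∞. There exists a constant c such that for all nonnegative measurable functions f and g on ℝⁿ, ∫_{ℝⁿ} (M f(x))^p g(x) dx ≤ c ∫_{ℝⁿ} f(x)^p (M g)(x) dx, where M is the Hardy–Littlewood maximal operator over cubes. -/
open MeasureTheory ENNReal Filter
open scoped ENNReal Topology

open MeasureTheory ENNReal Filter Set
open scoped ENNReal Topology

noncomputable section
namespace FS
variable {n : ℕ}

lemma cube_eq_pi (a : Fin n → ℝ) (l : ℝ) :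
    Cube a l = Set.pi Set.univ (fun i => Set.Ico (a i) (a i + l)) := by
  ext x; simp [Cube, Set.mem_pi]

lemma measurableSet_cube (a : Fin n → ℝ) (l : ℝ) : MeasurableSet (Cube a l) := by
  rw [cube_eq_pi]; exact MeasurableSet.univ_pi fun i => measurableSet_Ico

lemma volume_cube (a : Fin n → ℝ) {l : ℝ} (hl : 0 ≤ l) :
    volume (Cube a l) = ENNReal.ofReal l ^ n := by
  rw [cube_eq_pi, volume_pi_pi]
  simp [Real.volume_Ico]

/-- index type for rational cubes -/
abbrev RC (n : ℕ) := (Fin n → ℚ) × ℚ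

def rcorner (q : RC n) : Fin n → ℝ := fun i => (q.1 i : ℝ)
def rside (q : RC n) : ℝ := (q.2 : ℝ)
def rcube (q : RC n) : Set (Fin n → ℝ) := Cube (rcorner q) (rside q)

/-- truncated maximal function over rational cubes of side ≤ R -/
def MR (R : ℝ) (f : (Fin n → ℝ) → ℝ) (x : Fin n → ℝ) : ℝ≥0∞ :=
  ⨆ (q : RC n) (_ : 0 < rside q) (_ : rside q ≤ R) (_ : x ∈ rcube q), avg (rcube q) f

lemma measurable_MR (R : ℝ) (f : (Fin n → ℝ) → ℝ) : Measurable (MR R f) := by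
  have h : MR R f = fun x => ⨆ (q : RC n) (_ : 0 < rside q) (_ : rside q ≤ R),
      (rcube q).indicator (fun _ => avg (rcube q) f) x := by
    funext x
    unfold MR
    congr 1; funext q; congr 1; funext h1; congr 1; funext h2
    by_cases hx : x ∈ rcube q <;> simp [hx]
  rw [h]
  refine Measurable.iSup fun q => ?_
  refine Measurable.iSup fun _ => Measurable.iSup fun _ => ?_
  exact measurable_const.indicator (measurableSet_cube _ _)

lemma MR_mono {R R' : ℝ} (h : R ≤ R') (f : (Fin n → ℝ) → ℝ) (x : Fin n → ℝ) :
    MR R f x ≤ MR R' f x := by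
  refine iSup_le fun q => iSup_le fun h1 => iSup_le fun h2 => iSup_le fun hx => ?_
  exact le_iSup_of_le q <| le_iSup_of_le h1 <| le_iSup_of_le (le_trans h2 h) <| le_iSup_of_le hx le_rfl

lemma MR_le_maximal (R : ℝ) (f : (Fin n → ℝ) → ℝ) (x : Fin n → ℝ) :
    MR R f x ≤ maximal f x := by
  refine iSup_le fun q => iSup_le fun h1 => iSup_le fun _ => iSup_le fun hx => ?_
  exact le_iSup_of_le (rcorner q) <| le_iSup_of_le (rside q) <| le_iSup_of_le h1 <|
    le_iSup_of_le hx le_rfl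

lemma avg_le_MR {f : (Fin n → ℝ) → ℝ} {a : Fin n → ℝ} {l : ℝ} (hl : 0 < l) {x : Fin n → ℝ}
    (hx : x ∈ Cube a l) {R : ℝ} (hR : l + 2 ≤ R) :
    avg (Cube a l) f ≤ MR R f x := by
  set X : ℝ≥0∞ := ∫⁻ y in Cube a l, ENNReal.ofReal |f y| with hX
  -- for each m, a rational cube slightly larger
  have key : ∀ m : ℕ, X / (ENNReal.ofReal (l + 2/(m+1))) ^ n ≤ MR R f x := by
    intro m
    have hm : (0:ℝ) < 1/(m+1) := by positivity
    have ha : ∀ i : Fin n, ∃ q : ℚ, a i - 1/(m+1) < (q:ℝ) ∧ (q:ℝ) < a i := by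
      intro i; exact exists_rat_btwn (by linarith)
    choose qa hqa1 hqa2 using ha
    have hm2 : (1:ℝ)/(m+1) < 2/(m+1) := by gcongr <;> norm_num
    have hm3 : (2:ℝ)/(m+1) ≤ 2 := by
      rw [div_le_iff₀ (by positivity)]; nlinarith [Nat.cast_nonneg (α := ℝ) m]
    obtain ⟨ql, hql1, hql2⟩ := exists_rat_btwn (by linarith : l + 1/(m+1) < l + 2/(m+1))
    set q : RC n := (qa, ql) with hq
    have hrs : rside q = (ql : ℝ) := rfl
    have hsub : Cube a l ⊆ rcube q := by
      intro y hy i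
      constructor
      · exact le_trans (hqa2 i).le (hy i).1
      · refine lt_of_lt_of_le (hy i).2 ?_
        have : (rcorner q) i = (qa i : ℝ) := rfl
        rw [this, hrs]
        have := hqa1 i
        linarith
    have h1 : 0 < rside q := by rw [hrs]; linarith
    have h2 : rside q ≤ R := by rw [hrs]; linarith
    have hx' : x ∈ rcube q := hsub hx
    have havg : X / (ENNReal.ofReal (l + 2/(m+1))) ^ n ≤ avg (rcube q) f := by
      unfold avg
      rw [rcube, volume_cube _ h1.le]
      refine ENNReal.div_le_div ?_ ?_
      · exact lintegral_mono_set hsub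
      · refine pow_le_pow_left₀ ?_ ?_ n
        · exact zero_le
        · exact ENNReal.ofReal_le_ofReal (by rw [hrs]; linarith)
    refine le_trans havg ?_
    exact le_iSup_of_le q <| le_iSup_of_le h1 <| le_iSup_of_le h2 <| le_iSup_of_le hx' le_rfl
  -- now take limits
  have hvol : avg (Cube a l) f = X / (ENNReal.ofReal l) ^ n := by
    unfold avg; rw [volume_cube _ hl.le]
  rw [hvol]
  have hlim : Tendsto (fun m : ℕ => (ENNReal.ofReal (l + 2/(m+1))) ^ n) atTop
      (𝓝 ((ENNReal.ofReal l) ^ n)) := by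
    have h1 : Tendsto (fun m : ℕ => l + 2/(m+1 : ℝ)) atTop (𝓝 l) := by
      have := tendsto_one_div_add_atTop_nhds_zero_nat (𝕜 := ℝ)
      have h2 : Tendsto (fun m : ℕ => 2 * (1/(m+1 : ℝ))) atTop (𝓝 (2 * 0)) := this.const_mul 2
      simp only [mul_zero] at h2
      have := h2.const_add l
      simpa [mul_one_div, add_zero, div_eq_mul_inv] using this
    exact ((ENNReal.continuous_pow n).tendsto _).comp ((ENNReal.continuous_ofReal.tendsto l).comp h1)
  have hinf : (⨅ m : ℕ, (ENNReal.ofReal (l + 2/(m+1))) ^ n) ≤ (ENNReal.ofReal l) ^ n :=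
    ge_of_tendsto' hlim fun m => iInf_le _ m
  calc X / (ENNReal.ofReal l) ^ n ≤ X / ⨅ m : ℕ, (ENNReal.ofReal (l + 2/(m+1))) ^ n :=
        ENNReal.div_le_div_left hinf X
    _ = X * ⨆ m : ℕ, ((ENNReal.ofReal (l + 2/(m+1))) ^ n)⁻¹ := by
        rw [ENNReal.div_eq_inv_mul, mul_comm, ENNReal.inv_iInf]
    _ = ⨆ m : ℕ, X / (ENNReal.ofReal (l + 2/(m+1))) ^ n := by
        rw [ENNReal.mul_iSup]; simp [ENNReal.div_eq_inv_mul, mul_comm]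
    _ ≤ MR R f x := iSup_le key

lemma maximal_eq (f : (Fin n → ℝ) → ℝ) (x : Fin n → ℝ) :
    maximal f x = ⨆ R : ℕ, MR (R:ℝ) f x := by
  apply le_antisymm
  · refine iSup_le fun a => iSup_le fun l => iSup_le fun hl => iSup_le fun hx => ?_
    obtain ⟨R, hR⟩ := exists_nat_ge (l + 2)
    exact le_trans (avg_le_MR hl hx hR) (le_iSup_of_le R le_rfl)
  · exact iSup_le fun R => MR_le_maximal _ f x

lemma measurable_maximal (f : (Fin n → ℝ) → ℝ) : Measurable (maximal f) := by
  have : maximal f = fun x => ⨆ R : ℕ, MR (R:ℝ) f x := funext (maximal_eq f)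
  rw [this]
  exact Measurable.iSup fun R => measurable_MR _ f

end FS
end
noncomputable section
namespace FS

lemma lintegral_rpow_Ioo {r : ℝ} (hr : -1 < r) {b : ℝ} (hb : 0 ≤ b) :
    ∫⁻ s in Set.Ioo (0:ℝ) b, ENNReal.ofReal (s ^ r) = ENNReal.ofReal (b ^ (r+1) / (r+1)) := by
  rcases eq_or_lt_of_le hb with hb0 | hb0
  · rw [← hb0]
    simp [Real.zero_rpow (by linarith : r + 1 ≠ 0)]
  · have hint : IntegrableOn (fun s : ℝ => s ^ r) (Set.Ioo 0 b) :=
      (intervalIntegral.integrableOn_Ioo_rpow_iff hb0).2 hr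
    rw [← ofReal_integral_eq_lintegral_ofReal hint]
    · congr 1
      rw [← MeasureTheory.integral_Ioc_eq_integral_Ioo,
        ← intervalIntegral.integral_of_le hb0.le, integral_rpow (Or.inl hr)]
      rw [Real.zero_rpow (by linarith : r + 1 ≠ 0)]
      ring_nf
    · filter_upwards [ae_restrict_mem measurableSet_Ioo] with s hs
      exact Real.rpow_nonneg hs.1.le r

lemma rpow_eq_layercake {p : ℝ} (hp : 1 < p) (c : ℝ≥0∞) :
    c ^ p = ∫⁻ s in Set.Ioi (0:ℝ),
      {s : ℝ | ENNReal.ofReal s < c}.indicator (fun s => ENNReal.ofReal (p * s ^ (p-1))) s := by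
  have hSmeas : MeasurableSet {s : ℝ | ENNReal.ofReal s < c} :=
    measurableSet_lt (by fun_prop) measurable_const
  rcases eq_or_ne c 0 with rfl | hc0
  · have : {s : ℝ | ENNReal.ofReal s < 0} = ∅ := by
      ext s; simp
    rw [this]
    simp [ENNReal.zero_rpow_of_pos (by linarith : (0:ℝ) < p)]
  rcases eq_or_ne c ∞ with rfl | hctop
  · have hS : {s : ℝ | ENNReal.ofReal s < ∞} = univ := by ext s; simp
    rw [hS, indicator_univ]
    rw [ENNReal.top_rpow_of_pos (by linarith : (0:ℝ) < p)]
    symm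
    rw [eq_top_iff]
    calc (⊤ : ℝ≥0∞) = ENNReal.ofReal p * volume (Set.Ioi (1:ℝ)) := by
          rw [Real.volume_Ioi, ENNReal.mul_top (by simp [ENNReal.ofReal_eq_zero]; linarith)]
      _ = ∫⁻ s in Set.Ioi (1:ℝ), ENNReal.ofReal p := by rw [setLIntegral_const]
      _ ≤ ∫⁻ s in Set.Ioi (1:ℝ), ENNReal.ofReal (p * s ^ (p-1)) := by
          refine setLIntegral_mono' measurableSet_Ioi fun s hs => ?_
          refine ENNReal.ofReal_le_ofReal ?_
          nlinarith [Real.one_le_rpow (le_of_lt hs) (by linarith : (0:ℝ) ≤ p - 1)]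
      _ ≤ ∫⁻ s in Set.Ioi (0:ℝ), ENNReal.ofReal (p * s ^ (p-1)) :=
          lintegral_mono_set (Set.Ioi_subset_Ioi zero_le_one)
  · -- finite positive case
    have hb : 0 < c.toReal := ENNReal.toReal_pos hc0 hctop
    rw [lintegral_indicator hSmeas, Measure.restrict_restrict hSmeas]
    have hset : {s : ℝ | ENNReal.ofReal s < c} ∩ Set.Ioi 0 = Set.Ioo 0 c.toReal := by
      ext s
      simp only [mem_inter_iff, mem_setOf_eq, mem_Ioi, mem_Ioo]
      constructor
      · rintro ⟨h1, h2⟩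
        exact ⟨h2, (ENNReal.ofReal_lt_iff_lt_toReal h2.le hctop).1 h1⟩
      · rintro ⟨h1, h2⟩
        exact ⟨(ENNReal.ofReal_lt_iff_lt_toReal h1.le hctop).2 h2, h1⟩
    rw [hset]
    have : ∀ s ∈ Set.Ioo (0:ℝ) c.toReal,
        ENNReal.ofReal (p * s ^ (p-1)) = ENNReal.ofReal p * ENNReal.ofReal (s ^ (p-1)) := by
      intro s hs
      rw [ENNReal.ofReal_mul (by linarith)]
    rw [setLIntegral_congr_fun measurableSet_Ioo this, lintegral_const_mul' _ _
      ENNReal.ofReal_ne_top, lintegral_rpow_Ioo (by linarith : (-1:ℝ) < p - 1) hb.le]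
    have hp1 : p - 1 + 1 = p := by ring
    rw [hp1, ← ENNReal.ofReal_mul (by linarith), mul_div_cancel₀ _ (by linarith : p ≠ 0),
      ← ENNReal.ofReal_rpow_of_pos hb, ENNReal.ofReal_toReal hctop]
end FS
end
noncomputable section
namespace FS
variable {n : ℕ}
open Metric

lemma enn_calc {F τ V X : ℝ≥0∞} (hF0 : F ≠ 0) (hFt : F ≠ ∞) (hτ0 : τ ≠ 0) (hτt : τ ≠ ∞)
    (hV0 : V ≠ 0) (hVt : V ≠ ∞) : X ≤ F / τ * (τ * V * (X / (F * V))) := by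
  have h1 : τ⁻¹ * τ = 1 := ENNReal.inv_mul_cancel hτ0 hτt
  have h2 : (F * V)⁻¹ * (F * V) = 1 :=
    ENNReal.inv_mul_cancel (mul_ne_zero hF0 hV0) (ENNReal.mul_ne_top hFt hVt)
  refine le_of_eq ?_
  rw [ENNReal.div_eq_inv_mul, ENNReal.div_eq_inv_mul]
  calc X = (τ⁻¹ * τ) * (((F * V)⁻¹ * (F * V)) * X) := by rw [h1, h2, one_mul, one_mul]
    _ = τ⁻¹ * F * (τ * V * ((F * V)⁻¹ * X)) := by ring

def cent (q : RC n) : Fin n → ℝ := fun i => rcorner q i + rside q / 2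
def rad (q : RC n) : ℝ := rside q / 2
def big (q : RC n) : Set (Fin n → ℝ) :=
  Cube (fun i => rcorner q i - (3/2) * rside q) (5 * rside q)

lemma rcube_subset_ball {q : RC n} (hq : 0 < rside q) :
    rcube q ⊆ closedBall (cent q) (rad q) := by
  intro y hy
  have hr : rad q = rside q / 2 := rfl
  rw [mem_closedBall, dist_pi_le_iff (by rw [hr]; linarith : (0:ℝ) ≤ rad q)]
  intro i
  obtain ⟨h1, h2⟩ := hy i
  have hc : cent q i = rcorner q i + rside q / 2 := rfl
  rw [Real.dist_eq, abs_le, hc, hr]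
  constructor <;> linarith

lemma ball_subset_big {q : RC n} (hq : 0 < rside q) :
    closedBall (cent q) (4 * rad q) ⊆ big q := by
  intro y hy
  have hr : rad q = rside q / 2 := rfl
  rw [mem_closedBall, dist_pi_le_iff (by rw [hr]; linarith : (0:ℝ) ≤ 4 * rad q)] at hy
  intro i
  have h := hy i
  have hc : cent q i = rcorner q i + rside q / 2 := rfl
  rw [Real.dist_eq, abs_le, hc, hr] at h
  exact ⟨by linarith [h.1], by linarith [h.2]⟩

lemma rcube_subset_big {q : RC n} (hq : 0 < rside q) : rcube q ⊆ big q :=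
  fun y hy => ball_subset_big hq
    (closedBall_subset_closedBall (by have : rad q = rside q / 2 := rfl; rw [this]; linarith)
      (rcube_subset_ball hq hy))

lemma measurableSet_big (q : RC n) : MeasurableSet (big q) := measurableSet_cube _ _

lemma maximal_ge_avg (g : (Fin n → ℝ) → ℝ) {a : Fin n → ℝ} {l : ℝ} (hl : 0 < l)
    {y : Fin n → ℝ} (hy : y ∈ Cube a l) : avg (Cube a l) g ≤ maximal g y :=
  le_iSup_of_le a <| le_iSup_of_le l <| le_iSup_of_le hl <| le_iSup_of_le hy le_rfl

/-- per-cube estimate -/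
lemma cube_bound {f g : (Fin n → ℝ) → ℝ} (hf : Measurable f)
    (hf0 : ∀ x, 0 ≤ f x) (hg0 : ∀ x, 0 ≤ g x) {t : ℝ} (ht : 0 < t) {q : RC n}
    (hq : 0 < rside q) (havg : ENNReal.ofReal t < avg (rcube q) f) :
    (volume.withDensity fun x => ENNReal.ofReal (g x)) (big q)
      ≤ ENNReal.ofReal (5 ^ n / t) *
        ∫⁻ y in rcube q, ENNReal.ofReal (f y) * maximal g y := by
  set μ' := volume.withDensity fun x => ENNReal.ofReal (g x) with hμ'
  set l := rside q with hls
  set V : ℝ≥0∞ := (ENNReal.ofReal l) ^ n with hV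
  set F : ℝ≥0∞ := (ENNReal.ofReal 5) ^ n with hF
  have hV0 : V ≠ 0 := by
    rw [hV]; exact pow_ne_zero n (by simp [ENNReal.ofReal_eq_zero]; linarith)
  have hVt : V ≠ ∞ := by rw [hV]; exact ENNReal.pow_ne_top ENNReal.ofReal_ne_top
  have hF0 : F ≠ 0 := by
    rw [hF]; exact pow_ne_zero n (by simp [ENNReal.ofReal_eq_zero])
  have hFt : F ≠ ∞ := by rw [hF]; exact ENNReal.pow_ne_top ENNReal.ofReal_ne_top
  have hτ0 : ENNReal.ofReal t ≠ 0 := by simp [ENNReal.ofReal_eq_zero]; linarith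
  have hvolbig : volume (big q) = F * V := by
    rw [big, volume_cube _ (by linarith : (0:ℝ) ≤ 5 * l), ← mul_pow,
      ← ENNReal.ofReal_mul (by norm_num : (0:ℝ) ≤ 5)]
  -- Key 1 : lower bound for the maximal function of g on the cube
  have key1 : ∀ y ∈ rcube q, μ' (big q) / (F * V) ≤ maximal g y := by
    intro y hy
    have h1 : avg (big q) g ≤ maximal g y :=
      maximal_ge_avg g (by linarith : (0:ℝ) < 5 * l) (rcube_subset_big hq hy)
    refine le_trans (le_of_eq ?_) h1
    rw [avg, hvolbig, hμ', withDensity_apply _ (measurableSet_big q)]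
    congr 1
    refine lintegral_congr fun z => ?_
    rw [abs_of_nonneg (hg0 z)]
  -- Key 2 : lower bound for the integral of f on the cube
  have key2 : ENNReal.ofReal t * V ≤ ∫⁻ y in rcube q, ENNReal.ofReal (f y) := by
    have havg' : ENNReal.ofReal t < (∫⁻ y in rcube q, ENNReal.ofReal (f y)) / V := by
      have : avg (rcube q) f = (∫⁻ y in rcube q, ENNReal.ofReal (f y)) / V := by
        rw [avg, rcube, volume_cube _ hq.le]
        congr 1
        refine lintegral_congr fun z => ?_
        rw [abs_of_nonneg (hf0 z)]
      rw [← this]; exact havg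
    exact le_of_lt ((ENNReal.lt_div_iff_mul_lt (Or.inl hV0) (Or.inl hVt)).1 havg')
  have step : ENNReal.ofReal t * V * (μ' (big q) / (F * V))
      ≤ ∫⁻ y in rcube q, ENNReal.ofReal (f y) * maximal g y := by
    calc ENNReal.ofReal t * V * (μ' (big q) / (F * V))
        ≤ (∫⁻ y in rcube q, ENNReal.ofReal (f y)) * (μ' (big q) / (F * V)) :=
          mul_le_mul_left key2 _
      _ = ∫⁻ y in rcube q, ENNReal.ofReal (f y) * (μ' (big q) / (F * V)) :=
          (lintegral_mul_const _ hf.ennreal_ofReal).symm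
      _ ≤ ∫⁻ y in rcube q, ENNReal.ofReal (f y) * maximal g y :=
          setLIntegral_mono' (measurableSet_cube _ _) fun y hy =>
            mul_le_mul_right (key1 y hy) _
  have hconst : ENNReal.ofReal (5 ^ n / t) = F / ENNReal.ofReal t := by
    rw [ENNReal.ofReal_div_of_pos ht, hF, ENNReal.ofReal_pow (by norm_num : (0:ℝ) ≤ 5)]
  calc μ' (big q) ≤ F / ENNReal.ofReal t *
        (ENNReal.ofReal t * V * (μ' (big q) / (F * V))) :=
        enn_calc hF0 hFt hτ0 ENNReal.ofReal_ne_top hV0 hVt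
    _ ≤ F / ENNReal.ofReal t * ∫⁻ y in rcube q, ENNReal.ofReal (f y) * maximal g y :=
        mul_le_mul_right step _
    _ = ENNReal.ofReal (5 ^ n / t) * ∫⁻ y in rcube q, ENNReal.ofReal (f y) * maximal g y := by
        rw [hconst]

end FS
end
noncomputable section
namespace FS
variable {n : ℕ}
open Metric

lemma weak_bound {f g : (Fin n → ℝ) → ℝ} (hf : Measurable f)
    (hf0 : ∀ x, 0 ≤ f x) (hg0 : ∀ x, 0 ≤ g x) (R : ℝ) {t : ℝ} (ht : 0 < t) :
    (volume.withDensity fun x => ENNReal.ofReal (g x)) {x | ENNReal.ofReal t < MR R f x}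
      ≤ ENNReal.ofReal (5 ^ n / t) * ∫⁻ x, ENNReal.ofReal (f x) * maximal g x := by
  set μ' := volume.withDensity fun x => ENNReal.ofReal (g x) with hμ'
  set T : Set (RC n) :=
    {q | 0 < rside q ∧ rside q ≤ R ∧ ENNReal.ofReal t < avg (rcube q) f} with hT
  obtain ⟨u, husub, hudisj, hucov⟩ :=
    Vitali.exists_disjoint_subfamily_covering_enlargement_closedBall T (cent (n := n)) rad R
      (fun q hq => by
        have h1 : 0 < rside q := hq.1
        have h2 : rside q ≤ R := hq.2.1
        have : rad q = rside q / 2 := rfl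
        rw [this]; linarith)
      4 (by norm_num)
  have hcover : {x | ENNReal.ofReal t < MR R f x} ⊆ ⋃ q ∈ u, big q := by
    intro x hx
    simp only [MR, lt_iSup_iff, Set.mem_setOf_eq] at hx
    obtain ⟨q, h1, h2, hxq, havg⟩ := hx
    have hqT : q ∈ T := ⟨h1, h2, havg⟩
    obtain ⟨b, hbu, hball⟩ := hucov q hqT
    have hb1 : 0 < rside b := (husub hbu).1
    refine Set.mem_biUnion hbu ?_
    refine ball_subset_big hb1 ?_
    have : (4 : ℝ) * rad b = 4 * rad b := rfl
    exact hball (rcube_subset_ball h1 hxq)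
  calc μ' {x | ENNReal.ofReal t < MR R f x} ≤ μ' (⋃ q ∈ u, big q) := measure_mono hcover
    _ ≤ ∑' (q : u), μ' (big (q : RC n)) := measure_biUnion_le μ' (Set.to_countable u) big
    _ ≤ ∑' (q : u), ENNReal.ofReal (5 ^ n / t) *
          ∫⁻ y in rcube (q : RC n), ENNReal.ofReal (f y) * maximal g y := by
        refine ENNReal.tsum_le_tsum fun q => ?_
        have hqT := husub q.2
        exact cube_bound hf hf0 hg0 ht hqT.1 hqT.2.2
    _ = ENNReal.ofReal (5 ^ n / t) *
          ∑' (q : u), ∫⁻ y in rcube (q : RC n), ENNReal.ofReal (f y) * maximal g y :=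
        ENNReal.tsum_mul_left
    _ ≤ ENNReal.ofReal (5 ^ n / t) * ∫⁻ x, ENNReal.ofReal (f x) * maximal g x := by
        refine mul_le_mul_right ?_ _
        have hcnt : Countable u := (Set.to_countable u).to_subtype
        have hdisj : Pairwise (Function.onFun Disjoint fun q : u => rcube (q : RC n)) := by
          intro q1 q2 hne
          have hd := hudisj q1.2 q2.2 (fun h => hne (Subtype.coe_injective h))
          exact Disjoint.mono (rcube_subset_ball (husub q1.2).1)
            (rcube_subset_ball (husub q2.2).1) hd
        calc ∑' (q : u), ∫⁻ y in rcube (q : RC n), ENNReal.ofReal (f y) * maximal g y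
            = ∫⁻ y in ⋃ q : u, rcube (q : RC n), ENNReal.ofReal (f y) * maximal g y :=
              (lintegral_iUnion (s := fun q : u => rcube (q : RC n))
                (fun q => measurableSet_cube _ _) hdisj _).symm
          _ ≤ ∫⁻ x, ENNReal.ofReal (f x) * maximal g x := setLIntegral_le_lintegral _ _

end FS
end
noncomputable section
namespace FS
variable {n : ℕ}

lemma avg_le_avg_trunc_add {f : (Fin n → ℝ) → ℝ} (hf0 : ∀ x, 0 ≤ f x) {t : ℝ} (ht : 0 < t)
    {q : RC n} (hq : 0 < rside q) :
    avg (rcube q) f ≤ avg (rcube q) (fun x => if t/2 < f x then f x else 0)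
      + ENNReal.ofReal (t/2) := by
  set h : (Fin n → ℝ) → ℝ := fun x => if t/2 < f x then f x else 0 with hhdef
  have hptwise : ∀ y : Fin n → ℝ,
      ENNReal.ofReal |f y| ≤ ENNReal.ofReal |h y| + ENNReal.ofReal (t/2) := by
    intro y
    by_cases hy : t/2 < f y
    · have : h y = f y := if_pos hy
      rw [this]; exact le_self_add
    · push_neg at hy
      have : |f y| ≤ t/2 := by rw [abs_of_nonneg (hf0 y)]; exact hy
      exact (ENNReal.ofReal_le_ofReal this).trans le_add_self
  have hint : (∫⁻ y in rcube q, ENNReal.ofReal |f y|)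
      ≤ (∫⁻ y in rcube q, ENNReal.ofReal |h y|)
        + ENNReal.ofReal (t/2) * volume (rcube q) := by
    calc (∫⁻ y in rcube q, ENNReal.ofReal |f y|)
        ≤ ∫⁻ y in rcube q, (ENNReal.ofReal |h y| + ENNReal.ofReal (t/2)) :=
          lintegral_mono fun y => hptwise y
      _ = (∫⁻ y in rcube q, ENNReal.ofReal |h y|) + ENNReal.ofReal (t/2) * volume (rcube q) := by
          rw [lintegral_add_right _ measurable_const, setLIntegral_const]
  unfold avg
  calc (∫⁻ y in rcube q, ENNReal.ofReal |f y|) / volume (rcube q)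
      ≤ ((∫⁻ y in rcube q, ENNReal.ofReal |h y|)
          + ENNReal.ofReal (t/2) * volume (rcube q)) / volume (rcube q) :=
        ENNReal.div_le_div_right hint _
    _ = (∫⁻ y in rcube q, ENNReal.ofReal |h y|) / volume (rcube q)
          + ENNReal.ofReal (t/2) * volume (rcube q) / volume (rcube q) := ENNReal.add_div
    _ ≤ (∫⁻ y in rcube q, ENNReal.ofReal |h y|) / volume (rcube q) + ENNReal.ofReal (t/2) := by
        refine add_le_add_right ?_ _
        rw [mul_div_assoc]
        calc ENNReal.ofReal (t/2) * (volume (rcube q) / volume (rcube q))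
            ≤ ENNReal.ofReal (t/2) * 1 := mul_le_mul_right ENNReal.div_self_le_one _
          _ = ENNReal.ofReal (t/2) := mul_one _

lemma weak_trunc {f g : (Fin n → ℝ) → ℝ} (hf : Measurable f)
    (hf0 : ∀ x, 0 ≤ f x) (hg0 : ∀ x, 0 ≤ g x) (R : ℝ) {t : ℝ} (ht : 0 < t) :
    (volume.withDensity fun x => ENNReal.ofReal (g x)) {x | ENNReal.ofReal t < MR R f x}
      ≤ ENNReal.ofReal (2 * 5 ^ n / t) *
        ∫⁻ x, Set.indicator {y | t/2 < f y}
          (fun x => ENNReal.ofReal (f x) * maximal g x) x := by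
  set h : (Fin n → ℝ) → ℝ := fun x => if t/2 < f x then f x else 0 with hhdef
  have hmeas : Measurable h :=
    Measurable.ite (measurableSet_lt measurable_const hf) hf measurable_const
  have hh0 : ∀ x, 0 ≤ h x := by
    intro x; rw [hhdef]; dsimp only
    split
    · exact hf0 x
    · exact le_refl 0
  have ht2 : 0 < t/2 := by linarith
  have hincl : {x | ENNReal.ofReal t < MR R f x} ⊆ {x | ENNReal.ofReal (t/2) < MR R h x} := by
    intro x hx
    simp only [MR, lt_iSup_iff, Set.mem_setOf_eq] at hx ⊢
    obtain ⟨q, h1, h2, hxq, havg⟩ := hx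
    refine ⟨q, h1, h2, hxq, ?_⟩
    by_contra hle
    push_neg at hle
    have : avg (rcube q) f ≤ ENNReal.ofReal t := by
      calc avg (rcube q) f ≤ avg (rcube q) h + ENNReal.ofReal (t/2) :=
            avg_le_avg_trunc_add hf0 ht h1
        _ ≤ ENNReal.ofReal (t/2) + ENNReal.ofReal (t/2) := add_le_add_left hle _
        _ = ENNReal.ofReal t := by
            rw [← ENNReal.ofReal_add (by linarith) (by linarith)]
            norm_num
    exact absurd havg (not_lt.2 this)
  have heq : (∫⁻ x, ENNReal.ofReal (h x) * maximal g x)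
      = ∫⁻ x, Set.indicator {y | t/2 < f y}
          (fun x => ENNReal.ofReal (f x) * maximal g x) x := by
    refine lintegral_congr fun x => ?_
    by_cases hx : t/2 < f x
    · have hx' : x ∈ {y | t/2 < f y} := hx
      rw [Set.indicator_of_mem hx']
      have : h x = f x := if_pos hx
      rw [this]
    · have hx' : x ∉ {y | t/2 < f y} := hx
      rw [Set.indicator_of_notMem hx']
      have : h x = 0 := if_neg hx
      rw [this, ENNReal.ofReal_zero, zero_mul]
  have hconst : ENNReal.ofReal ((5:ℝ) ^ n / (t/2)) = ENNReal.ofReal (2 * 5 ^ n / t) := by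
    congr 1
    field_simp
  calc (volume.withDensity fun x => ENNReal.ofReal (g x)) {x | ENNReal.ofReal t < MR R f x}
      ≤ (volume.withDensity fun x => ENNReal.ofReal (g x))
          {x | ENNReal.ofReal (t/2) < MR R h x} := measure_mono hincl
    _ ≤ ENNReal.ofReal ((5:ℝ) ^ n / (t/2)) * ∫⁻ x, ENNReal.ofReal (h x) * maximal g x :=
        weak_bound hmeas hh0 hg0 R ht2
    _ = ENNReal.ofReal (2 * 5 ^ n / t) *
          ∫⁻ x, Set.indicator {y | t/2 < f y}
            (fun x => ENNReal.ofReal (f x) * maximal g x) x := by rw [heq, hconst]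

lemma weak_final {f g : (Fin n → ℝ) → ℝ} (hf : Measurable f)
    (hf0 : ∀ x, 0 ≤ f x) (hg0 : ∀ x, 0 ≤ g x) {t : ℝ} (ht : 0 < t) :
    (volume.withDensity fun x => ENNReal.ofReal (g x)) {x | ENNReal.ofReal t < maximal f x}
      ≤ ENNReal.ofReal (2 * 5 ^ n / t) *
        ∫⁻ x, Set.indicator {y | t/2 < f y}
          (fun x => ENNReal.ofReal (f x) * maximal g x) x := by
  have hunion : {x | ENNReal.ofReal t < maximal f x}
      = ⋃ R : ℕ, {x | ENNReal.ofReal t < MR (R:ℝ) f x} := by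
    ext x
    simp only [Set.mem_setOf_eq, Set.mem_iUnion, maximal_eq f x, lt_iSup_iff]
  have hmono : Monotone fun R : ℕ => {x | ENNReal.ofReal t < MR (R:ℝ) f x} := by
    intro R1 R2 hR x hx
    exact lt_of_lt_of_le hx (MR_mono (Nat.cast_le.2 hR) f x)
  rw [hunion, hmono.directed_le.measure_iUnion]
  exact iSup_le fun R => weak_trunc hf hf0 hg0 (R:ℝ) ht
end FS
end
noncomputable section
namespace FS
variable {n : ℕ}
open Set

lemma final_ptwise {p : ℝ} (hp : 1 < p) {a : ℝ} (ha : 0 ≤ a) (M : ℝ≥0∞) :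
    ENNReal.ofReal ((2*a) ^ (p-1) / (p-1)) * (ENNReal.ofReal a * M)
      = ENNReal.ofReal (2 ^ (p-1) / (p-1)) * (ENNReal.ofReal a ^ p * M) := by
  rw [← mul_assoc, ← mul_assoc]
  congr 1
  rw [ENNReal.ofReal_rpow_of_nonneg ha (by linarith : (0:ℝ) ≤ p),
    ← ENNReal.ofReal_mul (div_nonneg (Real.rpow_nonneg (by linarith) _) (by linarith)),
    ← ENNReal.ofReal_mul (div_nonneg (Real.rpow_nonneg (by norm_num) _) (by linarith))]
  congr 1
  rcases eq_or_lt_of_le ha with ha0 | ha0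
  · rw [← ha0]
    simp [Real.zero_rpow (show p ≠ 0 by linarith)]
  · have h2a : (2*a) ^ (p-1) = 2 ^ (p-1) * a ^ (p-1) := Real.mul_rpow (by norm_num) ha
    have hsum : a ^ (p-1) * a = a ^ p := by
      nth_rewrite 2 [← Real.rpow_one a]
      rw [← Real.rpow_add ha0]
      norm_num
    rw [h2a]
    calc (2:ℝ) ^ (p-1) * a ^ (p-1) / (p-1) * a = 2 ^ (p-1) / (p-1) * (a ^ (p-1) * a) := by ring
      _ = 2 ^ (p-1) / (p-1) * a ^ p := by rw [hsum]

end FS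
end

/-- Fefferman–Stein dual maximal inequality. -/
theorem fefferman_stein_dual (n : ℕ) (p : ℝ) (hp : 1 < p) :
    ∃ c : ℝ≥0∞, c < ∞ ∧ ∀ f g : (Fin n → ℝ) → ℝ,
      Measurable f → Measurable g → (∀ x, 0 ≤ f x) → (∀ x, 0 ≤ g x) →
      (∫⁻ x, (maximal f x) ^ p * ENNReal.ofReal (g x))
        ≤ c * ∫⁻ x, ENNReal.ofReal (f x) ^ p * maximal g x := by
  classical
  refine ⟨ENNReal.ofReal (2 * 5 ^ n * p) * ENNReal.ofReal (2 ^ (p-1) / (p-1)),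
    ENNReal.mul_lt_top ENNReal.ofReal_lt_top ENNReal.ofReal_lt_top, ?_⟩
  intro f g hf hg hf0 hg0
  have hp0 : (0:ℝ) < p := by linarith
  -- Step 1 : layer cake representation
  have step1 : (∫⁻ x, (maximal f x) ^ p * ENNReal.ofReal (g x))
      = ∫⁻ x, ∫⁻ s in Set.Ioi (0:ℝ),
          Set.indicator {s : ℝ | ENNReal.ofReal s < maximal f x}
            (fun s => ENNReal.ofReal (p * s ^ (p-1))) s * ENNReal.ofReal (g x) := by
    refine lintegral_congr fun x => ?_
    rw [FS.rpow_eq_layercake hp (maximal f x)]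
    exact (lintegral_mul_const' _ _ ENNReal.ofReal_ne_top).symm
  -- Step 2 : first Fubini swap
  have hA : MeasurableSet {z : (Fin n → ℝ) × ℝ | ENNReal.ofReal z.2 < maximal f z.1} :=
    measurableSet_lt measurable_snd.ennreal_ofReal
      ((FS.measurable_maximal f).comp measurable_fst)
  have step2 : (∫⁻ x, ∫⁻ s in Set.Ioi (0:ℝ),
          Set.indicator {s : ℝ | ENNReal.ofReal s < maximal f x}
            (fun s => ENNReal.ofReal (p * s ^ (p-1))) s * ENNReal.ofReal (g x))
      = ∫⁻ s in Set.Ioi (0:ℝ), ∫⁻ x,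
          Set.indicator {s : ℝ | ENNReal.ofReal s < maximal f x}
            (fun s => ENNReal.ofReal (p * s ^ (p-1))) s * ENNReal.ofReal (g x) := by
    refine lintegral_lintegral_swap ?_
    have heq : (Function.uncurry fun (x : Fin n → ℝ) (s : ℝ) =>
        Set.indicator {s : ℝ | ENNReal.ofReal s < maximal f x}
          (fun s => ENNReal.ofReal (p * s ^ (p-1))) s * ENNReal.ofReal (g x))
        = fun z : (Fin n → ℝ) × ℝ =>
          Set.indicator {z : (Fin n → ℝ) × ℝ | ENNReal.ofReal z.2 < maximal f z.1}
            (fun z => ENNReal.ofReal (p * z.2 ^ (p-1))) z * ENNReal.ofReal (g z.1) := by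
      funext z
      rcases z with ⟨x, s⟩
      simp only [Function.uncurry, Set.indicator_apply, Set.mem_setOf_eq]
    rw [heq]
    refine Measurable.aemeasurable (Measurable.mul ?_ (hg.comp measurable_fst).ennreal_ofReal)
    refine Measurable.indicator ?_ hA
    exact (show Measurable fun z : (Fin n → ℝ) × ℝ => p * z.2 ^ (p-1) by fun_prop).ennreal_ofReal
  -- Step 3 : inner integral is measure of superlevel set
  have hEmeas : ∀ s : ℝ, MeasurableSet {x | ENNReal.ofReal s < maximal f x} := fun s =>
    measurableSet_lt measurable_const (FS.measurable_maximal f)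
  have step3 : ∀ s : ℝ, (∫⁻ x,
          Set.indicator {s : ℝ | ENNReal.ofReal s < maximal f x}
            (fun s => ENNReal.ofReal (p * s ^ (p-1))) s * ENNReal.ofReal (g x))
      = ENNReal.ofReal (p * s ^ (p-1)) *
          (volume.withDensity fun x => ENNReal.ofReal (g x))
            {x | ENNReal.ofReal s < maximal f x} := by
    intro s
    have h1 : ∀ x : Fin n → ℝ,
        Set.indicator {s : ℝ | ENNReal.ofReal s < maximal f x}
          (fun s => ENNReal.ofReal (p * s ^ (p-1))) s * ENNReal.ofReal (g x)
        = Set.indicator {x | ENNReal.ofReal s < maximal f x}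
            (fun x => ENNReal.ofReal (p * s ^ (p-1)) * ENNReal.ofReal (g x)) x := by
      intro x
      by_cases hx : ENNReal.ofReal s < maximal f x
      · rw [Set.indicator_of_mem (show s ∈ {s : ℝ | ENNReal.ofReal s < maximal f x} from hx),
          Set.indicator_of_mem (show x ∈ {x | ENNReal.ofReal s < maximal f x} from hx)]
      · rw [Set.indicator_of_notMem (show s ∉ {s : ℝ | ENNReal.ofReal s < maximal f x} from hx),
          Set.indicator_of_notMem (show x ∉ {x | ENNReal.ofReal s < maximal f x} from hx),
          zero_mul]
    rw [lintegral_congr h1, lintegral_indicator (hEmeas s),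
      lintegral_const_mul' _ _ ENNReal.ofReal_ne_top,
      withDensity_apply _ (hEmeas s)]
  -- Step 4 : weak type bound
  have step4 : (∫⁻ s in Set.Ioi (0:ℝ), ENNReal.ofReal (p * s ^ (p-1)) *
          (volume.withDensity fun x => ENNReal.ofReal (g x))
            {x | ENNReal.ofReal s < maximal f x})
      ≤ ∫⁻ s in Set.Ioi (0:ℝ), ENNReal.ofReal (2 * 5 ^ n * p) *
          (ENNReal.ofReal (s ^ (p-2)) *
            ∫⁻ x, Set.indicator {y | s/2 < f y}
              (fun x => ENNReal.ofReal (f x) * maximal g x) x) := by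
    refine lintegral_mono_ae ?_
    rw [ae_restrict_iff' measurableSet_Ioi]
    refine Filter.Eventually.of_forall fun s hs => ?_
    have hs0 : (0:ℝ) < s := hs
    have hweak := FS.weak_final (n := n) (g := g) hf hf0 hg0 hs0
    have hconst : ENNReal.ofReal (p * s ^ (p-1)) * ENNReal.ofReal (2 * 5 ^ n / s)
        = ENNReal.ofReal (2 * 5 ^ n * p) * ENNReal.ofReal (s ^ (p-2)) := by
      rw [← ENNReal.ofReal_mul (mul_nonneg hp0.le (Real.rpow_nonneg hs0.le _)),
        ← ENNReal.ofReal_mul (mul_nonneg (by positivity) hp0.le)]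
      congr 1
      have h2 : s ^ (p-2) = s ^ (p-1) / s := by
        rw [show p - 2 = (p-1) - 1 by ring, Real.rpow_sub hs0, Real.rpow_one]
      rw [h2]
      field_simp
    calc ENNReal.ofReal (p * s ^ (p-1)) *
          (volume.withDensity fun x => ENNReal.ofReal (g x))
            {x | ENNReal.ofReal s < maximal f x}
        ≤ ENNReal.ofReal (p * s ^ (p-1)) * (ENNReal.ofReal (2 * 5 ^ n / s) *
            ∫⁻ x, Set.indicator {y | s/2 < f y}
              (fun x => ENNReal.ofReal (f x) * maximal g x) x) := mul_le_mul_right hweak _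
      _ = ENNReal.ofReal (2 * 5 ^ n * p) *
          (ENNReal.ofReal (s ^ (p-2)) *
            ∫⁻ x, Set.indicator {y | s/2 < f y}
              (fun x => ENNReal.ofReal (f x) * maximal g x) x) := by
          rw [← mul_assoc, ← mul_assoc, hconst]
  -- Step 5 : pull out the constant
  have step5 : (∫⁻ s in Set.Ioi (0:ℝ), ENNReal.ofReal (2 * 5 ^ n * p) *
          (ENNReal.ofReal (s ^ (p-2)) *
            ∫⁻ x, Set.indicator {y | s/2 < f y}
              (fun x => ENNReal.ofReal (f x) * maximal g x) x))
      = ENNReal.ofReal (2 * 5 ^ n * p) * ∫⁻ s in Set.Ioi (0:ℝ),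
          (ENNReal.ofReal (s ^ (p-2)) *
            ∫⁻ x, Set.indicator {y | s/2 < f y}
              (fun x => ENNReal.ofReal (f x) * maximal g x) x) :=
    lintegral_const_mul' _ _ ENNReal.ofReal_ne_top
  -- Step 6 : second Fubini swap
  have hB : MeasurableSet {z : ℝ × (Fin n → ℝ) | z.1/2 < f z.2} :=
    measurableSet_lt (measurable_fst.div_const 2) (hf.comp measurable_snd)
  have step6 : (∫⁻ s in Set.Ioi (0:ℝ),
          (ENNReal.ofReal (s ^ (p-2)) *
            ∫⁻ x, Set.indicator {y | s/2 < f y}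
              (fun x => ENNReal.ofReal (f x) * maximal g x) x))
      = ∫⁻ x, ∫⁻ s in Set.Ioi (0:ℝ), ENNReal.ofReal (s ^ (p-2)) *
          Set.indicator {y | s/2 < f y}
            (fun x => ENNReal.ofReal (f x) * maximal g x) x := by
    have hin : ∀ s : ℝ, (ENNReal.ofReal (s ^ (p-2)) *
          ∫⁻ x, Set.indicator {y | s/2 < f y}
            (fun x => ENNReal.ofReal (f x) * maximal g x) x)
        = ∫⁻ x, ENNReal.ofReal (s ^ (p-2)) *
            Set.indicator {y | s/2 < f y}
              (fun x => ENNReal.ofReal (f x) * maximal g x) x := fun s =>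
      (lintegral_const_mul' _ _ ENNReal.ofReal_ne_top).symm
    rw [lintegral_congr hin]
    refine lintegral_lintegral_swap ?_
    have heq : (Function.uncurry fun (s : ℝ) (x : Fin n → ℝ) =>
        ENNReal.ofReal (s ^ (p-2)) * Set.indicator {y | s/2 < f y}
          (fun x => ENNReal.ofReal (f x) * maximal g x) x)
        = fun z : ℝ × (Fin n → ℝ) => ENNReal.ofReal (z.1 ^ (p-2)) *
            Set.indicator {z : ℝ × (Fin n → ℝ) | z.1/2 < f z.2}
              (fun z => ENNReal.ofReal (f z.2) * maximal g z.2) z := by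
      funext z
      rcases z with ⟨s, x⟩
      simp only [Function.uncurry, Set.indicator_apply, Set.mem_setOf_eq]
    rw [heq]
    refine Measurable.aemeasurable ?_
    refine Measurable.mul ?_ ?_
    · exact (show Measurable fun z : ℝ × (Fin n → ℝ) => z.1 ^ (p-2) by fun_prop).ennreal_ofReal
    · exact Measurable.indicator
        ((hf.comp measurable_snd).ennreal_ofReal.mul
          ((FS.measurable_maximal g).comp measurable_snd)) hB
  -- Step 7 : compute the inner s-integral
  have step7 : ∀ x : Fin n → ℝ, (∫⁻ s in Set.Ioi (0:ℝ), ENNReal.ofReal (s ^ (p-2)) *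
          Set.indicator {y | s/2 < f y}
            (fun x => ENNReal.ofReal (f x) * maximal g x) x)
      = ENNReal.ofReal (2 ^ (p-1) / (p-1)) *
          (ENNReal.ofReal (f x) ^ p * maximal g x) := by
    intro x
    have h1 : ∀ s : ℝ, ENNReal.ofReal (s ^ (p-2)) *
        Set.indicator {y | s/2 < f y} (fun x => ENNReal.ofReal (f x) * maximal g x) x
        = Set.indicator (Set.Iio (2 * f x)) (fun s => ENNReal.ofReal (s ^ (p-2))) s *
            (ENNReal.ofReal (f x) * maximal g x) := by
      intro s
      by_cases hsx : s/2 < f x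
      · rw [Set.indicator_of_mem (show x ∈ {y | s/2 < f y} from hsx),
          Set.indicator_of_mem (show s ∈ Set.Iio (2 * f x) by
            simp only [Set.mem_Iio]; linarith)]
      · rw [Set.indicator_of_notMem (show x ∉ {y | s/2 < f y} from hsx),
          Set.indicator_of_notMem (show s ∉ Set.Iio (2 * f x) by
            simp only [Set.mem_Iio, not_lt] at hsx ⊢; linarith),
          mul_zero, zero_mul]
    have hmeasF : Measurable fun s : ℝ => Set.indicator (Set.Iio (2 * f x))
        (fun s => ENNReal.ofReal (s ^ (p-2))) s :=
      Measurable.indicator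
        ((show Measurable fun s : ℝ => s ^ (p-2) by fun_prop).ennreal_ofReal) measurableSet_Iio
    rw [lintegral_congr h1, lintegral_mul_const'' _ hmeasF.aemeasurable,
      lintegral_indicator measurableSet_Iio, Measure.restrict_restrict measurableSet_Iio,
      Set.Iio_inter_Ioi, FS.lintegral_rpow_Ioo (by linarith : (-1:ℝ) < p - 2)
        (by have := hf0 x; linarith : (0:ℝ) ≤ 2 * f x),
      show p - 2 + 1 = p - 1 by ring]
    exact FS.final_ptwise hp (hf0 x) (maximal g x)
  -- put everything together
  calc (∫⁻ x, (maximal f x) ^ p * ENNReal.ofReal (g x))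
      = ∫⁻ s in Set.Ioi (0:ℝ), ENNReal.ofReal (p * s ^ (p-1)) *
          (volume.withDensity fun x => ENNReal.ofReal (g x))
            {x | ENNReal.ofReal s < maximal f x} := by
        rw [step1, step2]; exact lintegral_congr fun s => step3 s
    _ ≤ ENNReal.ofReal (2 * 5 ^ n * p) * ∫⁻ s in Set.Ioi (0:ℝ),
          (ENNReal.ofReal (s ^ (p-2)) *
            ∫⁻ x, Set.indicator {y | s/2 < f y}
              (fun x => ENNReal.ofReal (f x) * maximal g x) x) := by
        rw [← step5]; exact step4
    _ = ENNReal.ofReal (2 * 5 ^ n * p) * ∫⁻ x, ENNReal.ofReal (2 ^ (p-1) / (p-1)) *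
          (ENNReal.ofReal (f x) ^ p * maximal g x) := by
        rw [step6]; exact congrArg _ (lintegral_congr fun x => step7 x)
    _ = ENNReal.ofReal (2 * 5 ^ n * p) * ENNReal.ofReal (2 ^ (p-1) / (p-1)) *
          ∫⁻ x, ENNReal.ofReal (f x) ^ p * maximal g x := by
        rw [lintegral_const_mul' _ _ ENNReal.ofReal_ne_top, ← mul_assoc]
end

section
/- Discrete convolution inequality: Let 0 < a < 1, 1 ≤ p ≤ ∞, 1 ≤ r ≤ ∞, 0 < q < ∞. Let {f_k}_{k∈ℤ} and {g_k}_{k∈ℤ} be sequences of nonnegative measurable functions on ℝⁿ, and define δ_k = ∑_{j=-∞}^{k} a^{k-j} (∫_{ℝⁿ} g_k f_j)^{1/q} and η_k = ∑_{j=k}^{∞} a^{j-k} (∫_{ℝⁿ} g_k f_j)^{1/q}. Then there exists c > 0 depending only on a and q such that ∑_k δ_k^q + ∑_k η_k^q ≤ c · ‖(∑_k f_k^r)^{1/r}‖_{L_p(ℝⁿ)} · ‖(∑_k g_k^{r'})^{1/r'}‖_{L_{p'}(ℝⁿ)}, where p', r' are conjugate exponents. -/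
open MeasureTheory ENNReal Filter
open scoped ENNReal Topology

section Helpers

open MeasureTheory

/-- Two-term rpow subadditivity for `0 < q ≤ 1`. -/
lemma my_rpow_add_le {x y : ℝ≥0∞} {q : ℝ} (hq : 0 < q) (hq1 : q ≤ 1) :
    (x + y) ^ q ≤ x ^ q + y ^ q := by
  have hq' : (1 : ℝ) ≤ 1 / q := by rw [le_div_iff₀ hq]; linarith
  have h := ENNReal.rpow_add_rpow_le_add (x ^ q) (y ^ q) hq'
  have hx : (x ^ q) ^ (1 / q) = x := by
    rw [← ENNReal.rpow_mul, mul_one_div_cancel hq.ne', ENNReal.rpow_one]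
  have hy : (y ^ q) ^ (1 / q) = y := by
    rw [← ENNReal.rpow_mul, mul_one_div_cancel hq.ne', ENNReal.rpow_one]
  rw [hx, hy, one_div_one_div] at h
  exact h

lemma my_sum_rpow {ι : Type*} (s : Finset ι) (u : ι → ℝ≥0∞) {q : ℝ} (hq : 0 < q) (hq1 : q ≤ 1) :
    (∑ i ∈ s, u i) ^ q ≤ ∑ i ∈ s, u i ^ q := by
  induction s using Finset.cons_induction with
  | empty => simp [ENNReal.zero_rpow_of_pos hq]
  | cons i s hi ih =>
      rw [Finset.sum_cons, Finset.sum_cons]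
      exact (my_rpow_add_le hq hq1).trans (add_le_add le_rfl ih)

lemma my_tsum_rpow {ι : Type*} (u : ι → ℝ≥0∞) {q : ℝ} (hq : 0 < q) (hq1 : q ≤ 1) :
    (∑' i, u i) ^ q ≤ ∑' i, u i ^ q := by
  have hR : (∑' i, u i ^ q) = ((∑' i, u i ^ q) ^ (1 / q)) ^ q := by
    rw [← ENNReal.rpow_mul, one_div_mul_cancel hq.ne', ENNReal.rpow_one]
  rw [hR, ENNReal.rpow_le_rpow_iff hq, ENNReal.tsum_eq_iSup_sum]
  refine iSup_le fun s => ?_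
  have h1 : (∑ i ∈ s, u i) ^ q ≤ ∑' i, u i ^ q :=
    (my_sum_rpow s u hq hq1).trans (ENNReal.sum_le_tsum s)
  calc ∑ i ∈ s, u i = ((∑ i ∈ s, u i) ^ q) ^ (1 / q) := by
        rw [← ENNReal.rpow_mul, mul_one_div_cancel hq.ne', ENNReal.rpow_one]
    _ ≤ (∑' i, u i ^ q) ^ (1 / q) := ENNReal.rpow_le_rpow h1 (by positivity)

/-- The `L_p` "norm" of an `ℝ≥0∞`-valued function w.r.t. a measure. -/
noncomputable def eN {α : Type*} [MeasurableSpace α] (μ : Measure α) (p : ℝ≥0∞)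
    (u : α → ℝ≥0∞) : ℝ≥0∞ :=
  if p = ∞ then essSup u μ else (∫⁻ x, u x ^ p.toReal ∂μ) ^ (1 / p.toReal)

/-- Hölder's inequality with extended exponents. -/
lemma my_holder {α : Type*} [MeasurableSpace α] (μ : Measure α) {p p' : ℝ≥0∞}
    (hc : 1 / p + 1 / p' = 1) {u v : α → ℝ≥0∞} (hu : AEMeasurable u μ) (hv : AEMeasurable v μ) :
    ∫⁻ x, u x * v x ∂μ ≤ eN μ p u * eN μ p' v := by
  simp only [one_div] at hc
  have essBound : ∀ (w z : α → ℝ≥0∞), AEMeasurable z μ →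
      ∫⁻ x, w x * z x ∂μ ≤ essSup w μ * ∫⁻ x, z x ∂μ := by
    intro w z hz
    calc ∫⁻ x, w x * z x ∂μ ≤ ∫⁻ x, essSup w μ * z x ∂μ :=
          lintegral_mono_ae ((ae_le_essSup w).mono fun x hx => mul_le_mul_left hx _)
      _ = essSup w μ * ∫⁻ x, z x ∂μ := lintegral_const_mul'' _ hz
  by_cases hp : p = ∞
  · have hp' : p' = 1 := by
      rw [hp] at hc; simp only [ENNReal.inv_top, zero_add] at hc
      rwa [ENNReal.inv_eq_one] at hc
    simp only [eN, hp, hp', if_pos rfl, if_neg ENNReal.one_ne_top, ENNReal.toReal_one,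
      ENNReal.rpow_one, div_one]
    exact essBound u v hv
  by_cases hp' : p' = ∞
  · have hp1 : p = 1 := by
      rw [hp'] at hc; simp only [ENNReal.inv_top, add_zero] at hc
      rwa [ENNReal.inv_eq_one] at hc
    simp only [eN, hp1, hp', if_pos rfl, if_neg ENNReal.one_ne_top, ENNReal.toReal_one,
      ENNReal.rpow_one, div_one]
    rw [mul_comm]
    simp_rw [mul_comm (u _) (v _)]
    exact essBound v u hu
  · have hp0 : p ≠ 0 := by
      rintro rfl; rw [ENNReal.inv_zero, top_add] at hc; exact ENNReal.top_ne_one hc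
    have hp'0 : p' ≠ 0 := by
      rintro rfl; rw [ENNReal.inv_zero, add_top] at hc; exact ENNReal.top_ne_one hc
    have h1p : 1 < p := by
      rw [← ENNReal.inv_lt_one]
      calc p⁻¹ < p⁻¹ + p'⁻¹ :=
            ENNReal.lt_add_right (ENNReal.inv_ne_top.2 hp0) (ENNReal.inv_ne_zero.2 hp')
        _ = 1 := hc
    have h1p' : 1 < p' := by
      rw [← ENNReal.inv_lt_one]
      calc p'⁻¹ < p'⁻¹ + p⁻¹ :=
            ENNReal.lt_add_right (ENNReal.inv_ne_top.2 hp'0) (ENNReal.inv_ne_zero.2 hp)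
        _ = 1 := by rw [add_comm]; exact hc
    have hpR : 1 < p.toReal := by
      rw [← ENNReal.toReal_one]
      exact (ENNReal.toReal_lt_toReal ENNReal.one_ne_top hp).2 h1p
    have hsum : p.toReal⁻¹ + p'.toReal⁻¹ = 1 := by
      rw [← ENNReal.toReal_inv, ← ENNReal.toReal_inv,
        ← ENNReal.toReal_add (ENNReal.inv_ne_top.2 hp0) (ENNReal.inv_ne_top.2 hp'0), hc,
        ENNReal.toReal_one]
    have hpq : Real.HolderConjugate p.toReal p'.toReal := Real.holderConjugate_iff.2 ⟨hpR, hsum⟩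
    have h := ENNReal.lintegral_mul_le_Lp_mul_Lq μ hpq hu hv
    simp only [Pi.mul_apply] at h
    simpa only [eN, if_neg hp, if_neg hp'] using h

lemma my_lq_eq (r : ℝ≥0∞) (w : ℤ → ℝ≥0∞) : lqNorm r w = eN Measure.count r w := by
  unfold lqNorm eN
  split
  · rw [essSup_count]
  · rw [lintegral_count]

lemma my_lq_shift (r : ℝ≥0∞) (w : ℤ → ℝ≥0∞) (m : ℤ) :
    lqNorm r (fun k => w (k + m)) = lqNorm r w := by
  unfold lqNorm
  split
  · refine le_antisymm (iSup_le fun k => le_iSup w (k + m)) (iSup_le fun k => ?_)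
    simpa using le_iSup (fun j => w (j + m)) (k - m)
  · exact congrArg (· ^ (1 / r.toReal)) ((Equiv.addRight m).tsum_eq fun j => w j ^ r.toReal)

lemma my_tsum_int_nat (v : ℤ → ℝ≥0∞) (hv : ∀ j : ℤ, j < 0 → v j = 0) :
    ∑' j : ℤ, v j = ∑' m : ℕ, v (m : ℤ) := by
  refine tsum_eq_tsum_of_ne_zero_bij (fun x => ((x.1 : ℕ) : ℤ)) ?_ ?_ ?_
  · intro x y h
    have h' : ((x : ℕ) : ℤ) = ((y : ℕ) : ℤ) := h
    exact Subtype.ext (by exact_mod_cast h')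
  · intro j hj
    have h0 : 0 ≤ j := le_of_not_gt fun h => hj (hv j h)
    exact ⟨⟨j.toNat, by simpa [Int.toNat_of_nonneg h0] using hj⟩,
      by simp [Int.toNat_of_nonneg h0]⟩
  · intro x; rfl

/-- The constant in the discrete convolution inequality. -/
noncomputable def myK (a q : ℝ) : ℝ≥0∞ :=
  if q ≤ 1 then (1 - ENNReal.ofReal (a ^ q))⁻¹ else ((1 - ENNReal.ofReal a)⁻¹) ^ q

lemma myK_one_le (a q : ℝ) (hq : 0 < q) : 1 ≤ myK a q := by
  unfold myK
  have h1 : ∀ b : ℝ≥0∞, (1 : ℝ≥0∞) ≤ (1 - b)⁻¹ := fun b => by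
    simpa using ENNReal.inv_le_inv' (tsub_le_self : 1 - b ≤ 1)
  split
  · exact h1 _
  · calc (1 : ℝ≥0∞) = 1 ^ q := (ENNReal.one_rpow q).symm
      _ ≤ _ := ENNReal.rpow_le_rpow (h1 _) hq.le

lemma myK_lt_top (a q : ℝ) (ha0 : 0 < a) (ha1 : a < 1) (hq : 0 < q) : myK a q < ∞ := by
  unfold myK
  have key : ∀ b : ℝ, 0 < b → b < 1 → (1 - ENNReal.ofReal b)⁻¹ < ∞ := by
    intro b hb0 hb1
    rw [ENNReal.inv_lt_top, tsub_pos_iff_lt]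
    exact ENNReal.ofReal_lt_one.2 hb1
  split
  · exact key _ (Real.rpow_pos_of_pos ha0 q) (Real.rpow_lt_one ha0.le ha1 hq)
  · exact ENNReal.rpow_lt_top_of_nonneg hq.le (key a ha0 ha1).ne

/-- The main discrete convolution estimate, abstracted. -/
lemma my_piece (a q : ℝ) (ha0 : 0 < a) (ha1 : a < 1) (hq : 0 < q) (A : ℝ≥0∞)
    (I : ℤ → ℕ → ℝ≥0∞) (hI : ∀ m : ℕ, ∑' k : ℤ, I k m ≤ A) :
    ∑' k : ℤ, (∑' m : ℕ, ENNReal.ofReal (a ^ m) * I k m ^ (1 / q)) ^ q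
      ≤ myK a q * myK a q * A := by
  have hIq : ∀ k m, (I k m ^ (1 / q)) ^ q = I k m := fun k m => by
    rw [← ENNReal.rpow_mul, one_div_mul_cancel hq.ne', ENNReal.rpow_one]
  have hofp : ∀ m : ℕ, ENNReal.ofReal (a ^ m) = ENNReal.ofReal a ^ m := fun m =>
    ENNReal.ofReal_pow ha0.le m
  have hGg1 : (1 : ℝ≥0∞) ≤ (1 - ENNReal.ofReal a)⁻¹ := by
    simpa using ENNReal.inv_le_inv' (tsub_le_self : 1 - ENNReal.ofReal a ≤ 1)
  by_cases hq1 : q ≤ 1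
  · -- case q ≤ 1
    have hK : myK a q = (1 - ENNReal.ofReal (a ^ q))⁻¹ := if_pos hq1
    have step : ∀ k, (∑' m : ℕ, ENNReal.ofReal (a ^ m) * I k m ^ (1 / q)) ^ q
        ≤ ∑' m : ℕ, ENNReal.ofReal (a ^ q) ^ m * I k m := by
      intro k
      refine (my_tsum_rpow _ hq hq1).trans (le_of_eq (tsum_congr fun m => ?_))
      rw [ENNReal.mul_rpow_of_nonneg _ _ hq.le, hIq]
      congr 1
      rw [ENNReal.ofReal_rpow_of_nonneg (pow_nonneg ha0.le m) hq.le]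
      rw [← ENNReal.ofReal_pow (Real.rpow_nonneg ha0.le q) m]
      congr 1
      rw [← Real.rpow_natCast a m, ← Real.rpow_mul ha0.le, mul_comm,
        Real.rpow_mul ha0.le, Real.rpow_natCast]
    calc ∑' k : ℤ, (∑' m : ℕ, ENNReal.ofReal (a ^ m) * I k m ^ (1 / q)) ^ q
        ≤ ∑' k : ℤ, ∑' m : ℕ, ENNReal.ofReal (a ^ q) ^ m * I k m :=
          ENNReal.tsum_le_tsum step
      _ = ∑' m : ℕ, ∑' k : ℤ, ENNReal.ofReal (a ^ q) ^ m * I k m := ENNReal.tsum_comm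
      _ = ∑' m : ℕ, ENNReal.ofReal (a ^ q) ^ m * ∑' k : ℤ, I k m := by
          simp_rw [ENNReal.tsum_mul_left]
      _ ≤ ∑' m : ℕ, ENNReal.ofReal (a ^ q) ^ m * A :=
          ENNReal.tsum_le_tsum fun m => mul_le_mul_right (hI m) _
      _ = (∑' m : ℕ, ENNReal.ofReal (a ^ q) ^ m) * A := ENNReal.tsum_mul_right
      _ = (1 - ENNReal.ofReal (a ^ q))⁻¹ * A := by rw [ENNReal.tsum_geometric]
      _ ≤ myK a q * myK a q * A := by
          rw [hK]
          exact mul_le_mul_left (le_mul_of_one_le_left' (by rw [← hK]; exact myK_one_le a q hq)) A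
  · -- case 1 < q
    push_neg at hq1
    have hK : myK a q = ((1 - ENNReal.ofReal a)⁻¹) ^ q := if_neg (not_le.2 hq1)
    have hpq : Real.HolderConjugate (q / (q - 1)) q :=
      (Real.HolderConjugate.conjExponent hq1).symm
    have hq'pos : 0 < q / (q - 1) := hpq.pos
    have hbm0 : ∀ m : ℕ, (ENNReal.ofReal a) ^ m ≠ 0 := fun m =>
      pow_ne_zero m (ENNReal.ofReal_pos.2 ha0).ne'
    have hbmtop : ∀ m : ℕ, (ENNReal.ofReal a) ^ m ≠ ∞ := fun m =>
      pow_ne_top ENNReal.ofReal_ne_top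
    set Gg : ℝ≥0∞ := (1 - ENNReal.ofReal a)⁻¹ with hGgdef
    have hGsum : (∑' m : ℕ, (ENNReal.ofReal a) ^ m) = Gg := ENNReal.tsum_geometric _
    have step : ∀ k, (∑' m : ℕ, ENNReal.ofReal (a ^ m) * I k m ^ (1 / q)) ^ q
        ≤ myK a q * ∑' m : ℕ, (ENNReal.ofReal a) ^ m * I k m := by
      intro k
      have hsplit : ∀ m : ℕ, ENNReal.ofReal (a ^ m) * I k m ^ (1 / q)
          = ((ENNReal.ofReal a ^ m) ^ (1 / (q / (q - 1)))) *
            ((ENNReal.ofReal a ^ m) ^ (1 / q) * I k m ^ (1 / q)) := by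
        intro m
        rw [← mul_assoc, hofp]
        congr 1
        have hsum1 : 1 / (q / (q - 1)) + 1 / q = 1 := by
          have := hpq.inv_add_inv_eq_one
          rw [one_div, one_div]; linarith
        rw [← ENNReal.rpow_add _ _ (hbm0 m) (hbmtop m), hsum1]
        exact (ENNReal.rpow_one _).symm
      have hH : (∑' m : ℕ, ENNReal.ofReal (a ^ m) * I k m ^ (1 / q))
          ≤ (∑' m : ℕ, ENNReal.ofReal a ^ m) ^ (1 / (q / (q - 1))) *
            (∑' m : ℕ, ENNReal.ofReal a ^ m * I k m) ^ (1 / q) := by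
        have hmeas1 : AEMeasurable (fun m : ℕ => (ENNReal.ofReal a ^ m) ^ (1 / (q / (q - 1))))
            Measure.count := (measurable_of_countable _).aemeasurable
        have hmeas2 : AEMeasurable (fun m : ℕ => (ENNReal.ofReal a ^ m) ^ (1 / q) * I k m ^ (1 / q))
            Measure.count := (measurable_of_countable _).aemeasurable
        have h := ENNReal.lintegral_mul_le_Lp_mul_Lq (Measure.count (α := ℕ)) hpq hmeas1 hmeas2
        simp only [Pi.mul_apply, lintegral_count] at h
        calc (∑' m : ℕ, ENNReal.ofReal (a ^ m) * I k m ^ (1 / q))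
            = ∑' m : ℕ, ((ENNReal.ofReal a ^ m) ^ (1 / (q / (q - 1)))) *
              ((ENNReal.ofReal a ^ m) ^ (1 / q) * I k m ^ (1 / q)) := tsum_congr hsplit
          _ ≤ (∑' m : ℕ, ((ENNReal.ofReal a ^ m) ^ (1 / (q / (q - 1)))) ^ (q / (q - 1))) ^
                (1 / (q / (q - 1))) *
              (∑' m : ℕ, ((ENNReal.ofReal a ^ m) ^ (1 / q) * I k m ^ (1 / q)) ^ q) ^ (1 / q) := h
          _ = (∑' m : ℕ, ENNReal.ofReal a ^ m) ^ (1 / (q / (q - 1))) *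
              (∑' m : ℕ, ENNReal.ofReal a ^ m * I k m) ^ (1 / q) := by
              congr 1
              · congr 1
                refine tsum_congr fun m => ?_
                rw [← ENNReal.rpow_mul, one_div_mul_cancel hq'pos.ne', ENNReal.rpow_one]
              · congr 1
                refine tsum_congr fun m => ?_
                rw [ENNReal.mul_rpow_of_nonneg _ _ hq.le, hIq, ← ENNReal.rpow_mul,
                  one_div_mul_cancel hq.ne', ENNReal.rpow_one]
      calc (∑' m : ℕ, ENNReal.ofReal (a ^ m) * I k m ^ (1 / q)) ^ q
          ≤ ((∑' m : ℕ, ENNReal.ofReal a ^ m) ^ (1 / (q / (q - 1))) *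
            (∑' m : ℕ, ENNReal.ofReal a ^ m * I k m) ^ (1 / q)) ^ q :=
            ENNReal.rpow_le_rpow hH hq.le
        _ = Gg ^ (1 / (q / (q - 1)) * q) * ∑' m : ℕ, ENNReal.ofReal a ^ m * I k m := by
            rw [ENNReal.mul_rpow_of_nonneg _ _ hq.le, ← ENNReal.rpow_mul, ← ENNReal.rpow_mul,
              one_div_mul_cancel hq.ne', ENNReal.rpow_one, hGsum]
        _ ≤ myK a q * ∑' m : ℕ, ENNReal.ofReal a ^ m * I k m := by
            refine mul_le_mul_left ?_ _
            rw [hK]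
            refine ENNReal.rpow_le_rpow_of_exponent_le hGg1 ?_
            have h1 : 1 / (q / (q - 1)) ≤ 1 := by
              rw [div_le_one hq'pos]
              exact hpq.lt.le
            calc 1 / (q / (q - 1)) * q ≤ 1 * q := mul_le_mul_of_nonneg_right h1 hq.le
              _ = q := one_mul q
    calc ∑' k : ℤ, (∑' m : ℕ, ENNReal.ofReal (a ^ m) * I k m ^ (1 / q)) ^ q
        ≤ ∑' k : ℤ, myK a q * ∑' m : ℕ, (ENNReal.ofReal a) ^ m * I k m :=
          ENNReal.tsum_le_tsum step
      _ = myK a q * ∑' k : ℤ, ∑' m : ℕ, (ENNReal.ofReal a) ^ m * I k m := ENNReal.tsum_mul_left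
      _ = myK a q * ∑' m : ℕ, ∑' k : ℤ, (ENNReal.ofReal a) ^ m * I k m := by
          rw [ENNReal.tsum_comm]
      _ = myK a q * ∑' m : ℕ, (ENNReal.ofReal a) ^ m * ∑' k : ℤ, I k m := by
          simp_rw [ENNReal.tsum_mul_left]
      _ ≤ myK a q * ∑' m : ℕ, (ENNReal.ofReal a) ^ m * A :=
          mul_le_mul_right (ENNReal.tsum_le_tsum fun m => mul_le_mul_right (hI m) _) _
      _ = myK a q * (Gg * A) := by rw [ENNReal.tsum_mul_right, hGsum]
      _ ≤ myK a q * (myK a q * A) := by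
          refine mul_le_mul_right (mul_le_mul_left ?_ A) _
          rw [hK]
          calc Gg = Gg ^ (1 : ℝ) := (ENNReal.rpow_one Gg).symm
            _ ≤ Gg ^ q := ENNReal.rpow_le_rpow_of_exponent_le hGg1 hq1.le
      _ = myK a q * myK a q * A := by rw [mul_assoc]

end Helpers


section MainHelpers

open MeasureTheory

lemma my_lq_meas {n : ℕ} (r : ℝ≥0∞) (h : ℤ → (Fin n → ℝ) → ℝ) (hm : ∀ k, Measurable (h k)) :
    Measurable fun x => lqNorm r fun k => ENNReal.ofReal (h k x) := by
  rcases eq_or_ne r ∞ with hr | hr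
  · simp only [lqNorm, if_pos hr]
    exact Measurable.iSup fun k => (hm k).ennreal_ofReal
  · simp only [lqNorm, if_neg hr]
    exact (Measurable.ennreal_tsum fun k =>
      ((hm k).ennreal_ofReal).pow measurable_const).pow measurable_const

lemma my_reindex_sub (w : ℤ → ℝ≥0∞) (a : ℝ) (k : ℤ) :
    (∑' j : ℤ, if j ≤ k then ENNReal.ofReal (a ^ (k - j)) * w j else 0)
      = ∑' m : ℕ, ENNReal.ofReal (a ^ m) * w (k - (m : ℤ)) := by
  rw [← (Equiv.subLeft k).tsum_eq
    (fun j => if j ≤ k then ENNReal.ofReal (a ^ (k - j)) * w j else 0)]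
  simp only [Equiv.subLeft_apply]
  rw [my_tsum_int_nat
    (fun j => if k - j ≤ k then ENNReal.ofReal (a ^ (k - (k - j))) * w (k - j) else 0)
    (fun j hj => if_neg (by omega))]
  refine tsum_congr fun m => ?_
  rw [if_pos (by omega : k - (m : ℤ) ≤ k), show k - (k - (m : ℤ)) = (m : ℤ) by ring,
    zpow_natCast]

lemma my_reindex_add (w : ℤ → ℝ≥0∞) (a : ℝ) (k : ℤ) :
    (∑' j : ℤ, if k ≤ j then ENNReal.ofReal (a ^ (j - k)) * w j else 0)
      = ∑' m : ℕ, ENNReal.ofReal (a ^ m) * w (k + (m : ℤ)) := by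
  rw [← (Equiv.addLeft k).tsum_eq
    (fun j => if k ≤ j then ENNReal.ofReal (a ^ (j - k)) * w j else 0)]
  simp only [Equiv.coe_addLeft]
  show (∑' j : ℤ, if k ≤ k + j then ENNReal.ofReal (a ^ (k + j - k)) * w (k + j) else 0) = _
  rw [my_tsum_int_nat
    (fun j => if k ≤ k + j then ENNReal.ofReal (a ^ (k + j - k)) * w (k + j) else 0)
    (fun j hj => if_neg (by omega))]
  refine tsum_congr fun m => ?_
  rw [if_pos (by omega : k ≤ k + (m : ℤ)), show k + (m : ℤ) - k = (m : ℤ) by ring,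
    zpow_natCast]

end MainHelpers

/-- discrete convolution inequality. -/
theorem discrete_convolution_inequality (n : ℕ) (a q : ℝ)
    (ha0 : 0 < a) (ha1 : a < 1) (hq : 0 < q) :
    ∃ c : ℝ≥0∞, 0 < c ∧ c < ∞ ∧ ∀ p r p' r' : ℝ≥0∞,
      1 ≤ p → 1 ≤ r → 1 / p + 1 / p' = 1 → 1 / r + 1 / r' = 1 →
      ∀ f g : ℤ → (Fin n → ℝ) → ℝ,
        (∀ k x, 0 ≤ f k x) → (∀ k x, 0 ≤ g k x) →
        (∀ k, Measurable (f k)) → (∀ k, Measurable (g k)) →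
        (∑' k : ℤ, (∑' j : ℤ, if j ≤ k then ENNReal.ofReal (a ^ (k - j)) *
              (∫⁻ x, ENNReal.ofReal (g k x) * ENNReal.ofReal (f j x)) ^ (1 / q) else 0) ^ q) +
          (∑' k : ℤ, (∑' j : ℤ, if k ≤ j then ENNReal.ofReal (a ^ (j - k)) *
              (∫⁻ x, ENNReal.ofReal (g k x) * ENNReal.ofReal (f j x)) ^ (1 / q) else 0) ^ q)
          ≤ c * lpNorm p (fun x => lqNorm r fun k => ENNReal.ofReal (f k x)) *
              lpNorm p' (fun x => lqNorm r' fun k => ENNReal.ofReal (g k x)) := by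
  classical
  have hK1 := myK_one_le a q hq
  have hKt := myK_lt_top a q ha0 ha1 hq
  have hK0 : myK a q ≠ 0 := (lt_of_lt_of_le one_pos hK1).ne'
  refine ⟨2 * (myK a q * myK a q), ?_, ?_, ?_⟩
  · exact ENNReal.mul_pos (by norm_num) (ENNReal.mul_pos hK0 hK0).ne'
  · exact ENNReal.mul_lt_top (by norm_num) (ENNReal.mul_lt_top hKt hKt)
  intro p r p' r' _ _ hpp' hrr' f g _ _ hfm hgm
  have hFmeas := my_lq_meas r f hfm
  have hGmeas := my_lq_meas r' g hgm
  set A := lpNorm p (fun x => lqNorm r fun k => ENNReal.ofReal (f k x)) *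
      lpNorm p' (fun x => lqNorm r' fun k => ENNReal.ofReal (g k x)) with hA
  have key : ∀ m : ℤ,
      (∑' k : ℤ, ∫⁻ x, ENNReal.ofReal (g k x) * ENNReal.ofReal (f (k + m) x)) ≤ A := by
    intro m
    have hmeas : ∀ k : ℤ, AEMeasurable
        (fun x => ENNReal.ofReal (g k x) * ENNReal.ofReal (f (k + m) x)) volume :=
      fun k => ((hgm k).ennreal_ofReal.mul ((hfm (k + m)).ennreal_ofReal)).aemeasurable
    calc (∑' k : ℤ, ∫⁻ x, ENNReal.ofReal (g k x) * ENNReal.ofReal (f (k + m) x))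
        = ∫⁻ x, ∑' k : ℤ, ENNReal.ofReal (g k x) * ENNReal.ofReal (f (k + m) x) :=
          (lintegral_tsum hmeas).symm
      _ ≤ ∫⁻ x, (lqNorm r fun k => ENNReal.ofReal (f k x)) *
            (lqNorm r' fun k => ENNReal.ofReal (g k x)) := by
          refine lintegral_mono fun x => ?_
          calc (∑' k : ℤ, ENNReal.ofReal (g k x) * ENNReal.ofReal (f (k + m) x))
              = ∫⁻ k : ℤ, (fun k => ENNReal.ofReal (f (k + m) x)) k *
                  (fun k => ENNReal.ofReal (g k x)) k ∂Measure.count := by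
                rw [lintegral_count]; exact tsum_congr fun k => mul_comm _ _
            _ ≤ eN Measure.count r (fun k => ENNReal.ofReal (f (k + m) x)) *
                  eN Measure.count r' (fun k => ENNReal.ofReal (g k x)) :=
                my_holder _ hrr' (measurable_of_countable _).aemeasurable
                  (measurable_of_countable _).aemeasurable
            _ = (lqNorm r fun k => ENNReal.ofReal (f k x)) *
                  (lqNorm r' fun k => ENNReal.ofReal (g k x)) := by
                rw [← my_lq_eq, ← my_lq_eq]
                exact congrArg (· * lqNorm r' fun k => ENNReal.ofReal (g k x))
                  (my_lq_shift r (fun j => ENNReal.ofReal (f j x)) m)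
      _ ≤ eN volume p (fun x => lqNorm r fun k => ENNReal.ofReal (f k x)) *
            eN volume p' (fun x => lqNorm r' fun k => ENNReal.ofReal (g k x)) :=
          my_holder volume hpp' hFmeas.aemeasurable hGmeas.aemeasurable
      _ = A := by rw [hA]; rfl
  have hδ : (∑' k : ℤ, (∑' j : ℤ, if j ≤ k then ENNReal.ofReal (a ^ (k - j)) *
        (∫⁻ x, ENNReal.ofReal (g k x) * ENNReal.ofReal (f j x)) ^ (1 / q) else 0) ^ q)
      ≤ myK a q * myK a q * A := by
    have hp := my_piece a q ha0 ha1 hq A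
      (fun k m => ∫⁻ x, ENNReal.ofReal (g k x) * ENNReal.ofReal (f (k - (m : ℤ)) x))
      (fun m => by simpa [sub_eq_add_neg] using key (-(m : ℤ)))
    refine le_trans (le_of_eq (tsum_congr fun k => ?_)) hp
    rw [my_reindex_sub
      (fun j => (∫⁻ x, ENNReal.ofReal (g k x) * ENNReal.ofReal (f j x)) ^ (1 / q)) a k]
  have hη : (∑' k : ℤ, (∑' j : ℤ, if k ≤ j then ENNReal.ofReal (a ^ (j - k)) *
        (∫⁻ x, ENNReal.ofReal (g k x) * ENNReal.ofReal (f j x)) ^ (1 / q) else 0) ^ q)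
      ≤ myK a q * myK a q * A := by
    have hp := my_piece a q ha0 ha1 hq A
      (fun k m => ∫⁻ x, ENNReal.ofReal (g k x) * ENNReal.ofReal (f (k + (m : ℤ)) x))
      (fun m => key (m : ℤ))
    refine le_trans (le_of_eq (tsum_congr fun k => ?_)) hp
    rw [my_reindex_add
      (fun j => (∫⁻ x, ENNReal.ofReal (g k x) * ENNReal.ofReal (f j x)) ^ (1 / q)) a k]
  refine le_trans (add_le_add hδ hη) ?_
  rw [hA]
  exact le_of_eq (by ring)
end
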